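/- arXiv:1506.00503 — 5 statements merged into one kernel-verified Lean document; each statement's English description precedes it below -/
import Mathlib

section
/- Let B_1,…,B_q ∈ ℤ^n and c_1,…,c_q ∈ ℤ, and define ψ_P(s) = ∏_{j=1}^q Γ(1 − ⟨B_j,s⟩ − c_j)^{-1} (with 1/Γ(z) = 0 at nonpositive integers z). Then the coefficients ψ_P satisfy a recursion with polynomial coefficients: for every k = 1,…,n and every s ∈ ℤ^n, ψ_P(s + e_k) · ∏_{j : B_{j,k} < 0} ∏_{ℓ=0}^{−B_{j,k}−1} (1 − ⟨B_j,s⟩ − c_j + ℓ) = ψ_P(s) · ∏_{j : B_{j,k} > 0} ∏_{ℓ=0}^{B_{j,k}−1} (−⟨B_j,s⟩ − c_j − ℓ), where e_k is the k-th standard basis vector of ℤ^n. (This is the hypergeometric recursion expressing that Σ ψ_P(s) x^s solves the Horn system defined by ψ_P.) -/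
/-- The Ore–Sato coefficient
`ψ_P(s) = ∏ⱼ Γ(1 − ⟨Bⱼ,s⟩ − cⱼ)⁻¹`.
(Mathlib's `Real.Gamma` vanishes at nonpositive integers, so `Γ(z)⁻¹ = 0` there.) -/
noncomputable def psiP {n q : ℕ} (B : Fin q → Fin n → ℤ) (c : Fin q → ℤ)
    (s : Fin n → ℤ) : ℝ :=
  ∏ j, (Real.Gamma (1 - ((∑ i, B j i * s i : ℤ) : ℝ) - ((c j : ℤ) : ℝ)))⁻¹

lemma Gamma_inv_step (x : ℝ) : (Real.Gamma x)⁻¹ = x * (Real.Gamma (x + 1))⁻¹ := by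
  rcases eq_or_ne x 0 with h | h
  · simp [h, Real.Gamma_zero]
  · rw [Real.Gamma_add_one h, mul_inv, ← mul_assoc, mul_inv_cancel₀ h, one_mul]

lemma Gamma_inv_shift (p : ℕ) (x : ℝ) :
    (Real.Gamma x)⁻¹ = (∏ ℓ ∈ Finset.range p, (x + ℓ)) * (Real.Gamma (x + p))⁻¹ := by
  induction p with
  | zero => simp
  | succ p ih =>
      rw [Finset.prod_range_succ, ih, Gamma_inv_step (x + p), mul_assoc]
      push_cast
      ring_nf

/-- The hypergeometric recursion with polynomial coefficients satisfied by the
coefficients `ψ_P`: for every `k` and every `s ∈ ℤⁿ`,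
`ψ_P(s+e_k) ⬝ ∏_{j : B_{j,k}<0} ∏_{ℓ=0}^{−B_{j,k}−1} (1−⟨Bⱼ,s⟩−cⱼ+ℓ)
  = ψ_P(s) ⬝ ∏_{j : B_{j,k}>0} ∏_{ℓ=0}^{B_{j,k}−1} (−⟨Bⱼ,s⟩−cⱼ−ℓ)`. -/
theorem psiP_recursion {n q : ℕ} (B : Fin q → Fin n → ℤ) (c : Fin q → ℤ)
    (k : Fin n) (s : Fin n → ℤ) :
    psiP B c (s + Pi.single k 1) *
        ∏ j ∈ Finset.univ.filter (fun j => B j k < 0),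
          ∏ ℓ ∈ Finset.range (-B j k).toNat,
            (1 - ((∑ i, B j i * s i : ℤ) : ℝ) - ((c j : ℤ) : ℝ) + (ℓ : ℝ)) =
      psiP B c s *
        ∏ j ∈ Finset.univ.filter (fun j => 0 < B j k),
          ∏ ℓ ∈ Finset.range (B j k).toNat,
            (-((∑ i, B j i * s i : ℤ) : ℝ) - ((c j : ℤ) : ℝ) - (ℓ : ℝ)) := by
  have hsum : ∀ j, (∑ i, B j i * (s + Pi.single k 1 : Fin n → ℤ) i) = (∑ i, B j i * s i) + B j k := by
    intro j
    simp only [Pi.add_apply, mul_add, Finset.sum_add_distrib]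
    congr 1
    simp [Pi.single_apply, mul_ite]
  unfold psiP
  rw [Finset.prod_filter, Finset.prod_filter, ← Finset.prod_mul_distrib,
    ← Finset.prod_mul_distrib]
  refine Finset.prod_congr rfl fun j _ => ?_
  rw [hsum j]
  set S := (∑ i, B j i * s i) with hS
  set a : ℝ := 1 - (S : ℝ) - (c j : ℝ) with ha
  have hcast : (1 : ℝ) - ((S + B j k : ℤ) : ℝ) - (c j : ℝ) = a - (B j k : ℝ) := by
    push_cast [ha]; ring
  rw [hcast]
  rcases lt_trichotomy (B j k) 0 with hm | hm | hm
  · rw [if_pos hm, if_neg (by omega)]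
    have hp : ((B j k : ℝ)) = -((-B j k).toNat : ℝ) := by
      have h : ((-B j k).toNat : ℤ) = -B j k := Int.toNat_of_nonneg (by omega)
      have h2 : B j k = -(((-B j k).toNat : ℕ) : ℤ) := by omega
      exact_mod_cast h2
    rw [hp, mul_one, sub_neg_eq_add]
    rw [Gamma_inv_shift ((-B j k).toNat) a, mul_comm]
  · simp [hm]
  · rw [if_neg (by omega), if_pos hm, mul_one]
    have hp : ((B j k : ℝ)) = ((B j k).toNat : ℝ) := by
      have h : ((B j k).toNat : ℤ) = B j k := Int.toNat_of_nonneg (by omega)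
      exact_mod_cast h.symm
    set p := (B j k).toNat with hpdef
    rw [hp, Gamma_inv_shift p (a - p), sub_add_cancel, mul_comm]
    congr 1
    rw [← Finset.prod_range_reflect]
    refine Finset.prod_congr rfl fun ℓ hℓ => ?_
    have hℓ' : ℓ < p := Finset.mem_range.mp hℓ
    have : ((p - 1 - ℓ : ℕ) : ℝ) = (p : ℝ) - 1 - ℓ := by
      have h1 : 1 + ℓ ≤ p := by omega
      rw [Nat.sub_sub, Nat.cast_sub h1]; push_cast; ring
    rw [this, ha]; ring
end

section
/- Let n ≥ 2 and let a_1,…,a_n, b_1,…,b_n, c be positive real numbers. The Laurent polynomial p(x) = c + Σ_{j=1}^n (a_j x_j + b_j x_j^{-1}), whose Newton polytope is the n-dimensional cross-polytope (with 2n+1 lattice points), is optimal — i.e. the complement ℝ^n ∖ 𝒜_p has exactly 2n+1 connected components — if and only if Σ_{j=1}^n √(a_j b_j) < c/2. -/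
/-- The amoeba of a function on the complex torus `(ℂ∖{0})^n`. -/
def amoeba {n : ℕ} (f : (Fin n → ℂ) → ℂ) : Set (Fin n → ℝ) :=
  {ξ | ∃ x : Fin n → ℂ, (∀ j, x j ≠ 0) ∧ f x = 0 ∧
        ∀ j, ξ j = Real.log ‖x j‖}


open Set Finset

namespace CrossAmoeba

/-- There is a point of the torus with given "radii data" where the polynomial vanishes. -/
def hits {n : ℕ} (A C : Fin n → ℝ) (c : ℝ) : Prop :=
  ∃ p q : Fin n → ℝ, (∀ j, (p j) ^ 2 + (q j) ^ 2 = 1) ∧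
    (∑ j, A j * p j) = -c ∧ (∑ j, C j * q j) = 0

/-- Flipping signs of `C` entries does not change `hits`. -/
lemma hits_of_hits_sign {n : ℕ} {A C C' : Fin n → ℝ} {c : ℝ}
    (hC : ∀ j, C' j = C j ∨ C' j = -C j) (h : hits A C c) : hits A C' c := by
  obtain ⟨p, q, hcirc, h1, h2⟩ := h
  classical
  refine ⟨p, fun j => if C' j = C j then q j else -(q j), fun j => ?_, h1, ?_⟩
  · by_cases h : C' j = C j
    · simpa [h] using hcirc j
    · have := hcirc j; simp only [if_neg h]; nlinarith
  · rw [← h2]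
    refine Finset.sum_congr rfl fun j _ => ?_
    by_cases h : C' j = C j
    · show C' j * (if C' j = C j then q j else -q j) = C j * q j
      rw [if_pos h, h]
    · rcases hC j with h' | h'
      · exact absurd h' h
      · show C' j * (if C' j = C j then q j else -q j) = C j * q j
        rw [if_neg h, h']; ring

/-- Core two–ellipse intermediate value construction. -/
lemma pair_core {A₁ A₂ C₁ C₂ w : ℝ} (hC : |C₂| ≤ |C₁|)
    (hw1 : A₁ - A₂ ≤ w) (hw2 : w ≤ A₁ + A₂) :
    ∃ p₁ q₁ p₂ q₂ : ℝ, p₁ ^ 2 + q₁ ^ 2 = 1 ∧ p₂ ^ 2 + q₂ ^ 2 = 1 ∧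
      A₁ * p₁ + A₂ * p₂ = w ∧ C₁ * q₁ + C₂ * q₂ = 0 := by
  classical
  have hsq : C₂ ^ 2 ≤ C₁ ^ 2 := by
    have := mul_self_le_mul_self (abs_nonneg C₂) hC
    nlinarith [sq_abs C₁, sq_abs C₂]
  obtain ⟨lam, hlam2, hClam⟩ : ∃ lam : ℝ, lam ^ 2 ≤ 1 ∧ C₁ * lam = C₂ := by
    by_cases h : C₁ = 0
    · refine ⟨0, by norm_num, ?_⟩
      have : C₂ ^ 2 ≤ 0 := by simpa [h] using hsq
      have : C₂ = 0 := by nlinarith [sq_nonneg C₂]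
      simp [h, this]
    · refine ⟨C₂ / C₁, ?_, by field_simp⟩
      rw [div_pow, div_le_one (by positivity)]; exact hsq
  set F : ℝ → ℝ := fun s => A₁ * Real.sqrt (1 - lam ^ 2 * (1 - s ^ 2)) + A₂ * s with hF
  have hFc : Continuous F := by
    apply Continuous.add
    · exact continuous_const.mul (Real.continuous_sqrt.comp (by continuity))
    · exact continuous_const.mul continuous_id
  have hFm1 : F (-1) = A₁ - A₂ := by simp [hF]; ring
  have hF1 : F 1 = A₁ + A₂ := by simp [hF]
  have hsub : Icc (F (-1)) (F 1) ⊆ F '' Icc (-1) 1 :=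
    intermediate_value_Icc (by norm_num) hFc.continuousOn
  obtain ⟨s, hs, hFs⟩ := hsub (by rw [hFm1, hF1]; exact ⟨hw1, hw2⟩)
  have hs2 : 1 - s ^ 2 ≥ 0 := by
    obtain ⟨h1, h2⟩ := hs; nlinarith
  have hinner : 0 ≤ 1 - lam ^ 2 * (1 - s ^ 2) := by nlinarith [sq_nonneg lam]
  refine ⟨Real.sqrt (1 - lam ^ 2 * (1 - s ^ 2)), -(lam * Real.sqrt (1 - s ^ 2)), s,
    Real.sqrt (1 - s ^ 2), ?_, ?_, ?_, ?_⟩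
  · rw [Real.sq_sqrt hinner]
    have h' : (Real.sqrt (1 - s ^ 2)) ^ 2 = 1 - s ^ 2 := Real.sq_sqrt hs2
    nlinarith [h']
  · rw [Real.sq_sqrt hs2]; ring
  · exact hFs
  · have : C₁ * -(lam * Real.sqrt (1 - s ^ 2)) = -(C₂ * Real.sqrt (1 - s ^ 2)) := by
      rw [← hClam]; ring
    rw [this]; ring

lemma pair_core' {A₁ A₂ C₁ C₂ w : ℝ} (hC : |C₂| ≤ |C₁|)
    (hw1 : |A₁ - A₂| ≤ |w|) (hw2 : |w| ≤ A₁ + A₂) :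
    ∃ p₁ q₁ p₂ q₂ : ℝ, p₁ ^ 2 + q₁ ^ 2 = 1 ∧ p₂ ^ 2 + q₂ ^ 2 = 1 ∧
      A₁ * p₁ + A₂ * p₂ = w ∧ C₁ * q₁ + C₂ * q₂ = 0 := by
  rcases le_or_gt 0 w with hw | hw
  · rw [abs_of_nonneg hw] at hw1 hw2
    exact pair_core hC (le_trans (le_abs_self _) hw1) hw2
  · rw [abs_of_neg hw] at hw1 hw2
    obtain ⟨p₁, q₁, p₂, q₂, h1, h2, h3, h4⟩ :=
      pair_core hC (le_trans (le_abs_self _) hw1) hw2 (w := -w)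
    exact ⟨-p₁, -q₁, -p₂, -q₂, by nlinarith, by nlinarith, by linarith, by linarith⟩

/-- Two–ellipse lemma: any real value `w` with `|A₁-A₂| ≤ |w| ≤ A₁+A₂` is realized. -/
lemma pair {A₁ A₂ C₁ C₂ w : ℝ} (hw1 : |A₁ - A₂| ≤ |w|) (hw2 : |w| ≤ A₁ + A₂) :
    ∃ p₁ q₁ p₂ q₂ : ℝ, p₁ ^ 2 + q₁ ^ 2 = 1 ∧ p₂ ^ 2 + q₂ ^ 2 = 1 ∧
      A₁ * p₁ + A₂ * p₂ = w ∧ C₁ * q₁ + C₂ * q₂ = 0 := by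
  rcases le_or_gt (|C₂|) (|C₁|) with h | h
  · exact pair_core' h hw1 hw2
  · obtain ⟨p₂, q₂, p₁, q₁, h2, h1, h3, h4⟩ :=
      pair_core' (le_of_lt h) (by rwa [abs_sub_comm]) (by linarith)
        (A₁ := A₂) (A₂ := A₁) (C₁ := C₂) (C₂ := C₁) (w := w)
    exact ⟨p₁, q₁, p₂, q₂, h1, h2, by linarith, by linarith⟩

/-- The sign walk: choose signs to land `c + Σ ε·A` in the window `[D-B, D+B]`. -/
lemma walk {ι : Type*} [DecidableEq ι] (T : Finset ι) (A : ι → ℝ) {B D : ℝ} :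
    ∀ c : ℝ, (∀ l ∈ T, 0 ≤ A l) → (∀ l ∈ T, A l ≤ B) →
    (D - B ≤ c + ∑ l ∈ T, A l) → (c - ∑ l ∈ T, A l ≤ D + B) →
    ∃ ε : ι → ℝ, (∀ l ∈ T, ε l = 1 ∨ ε l = -1) ∧
      D - B ≤ c + ∑ l ∈ T, ε l * A l ∧ c + ∑ l ∈ T, ε l * A l ≤ D + B := by
  classical
  induction T using Finset.induction_on with
  | empty => intro c _ _ h1 h2; exact ⟨fun _ => 1, by simp, by simpa using h1, by simpa using h2⟩
  | @insert a s ha ih =>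
    intro c h0 hB h1 h2
    have h0' : ∀ l ∈ s, 0 ≤ A l := fun l hl => h0 l (Finset.mem_insert_of_mem hl)
    have hB' : ∀ l ∈ s, A l ≤ B := fun l hl => hB l (Finset.mem_insert_of_mem hl)
    have hsum : ∑ l ∈ insert a s, A l = A a + ∑ l ∈ s, A l := Finset.sum_insert ha
    have hs0 : (0:ℝ) ≤ ∑ l ∈ s, A l := Finset.sum_nonneg h0'
    have ha0 : 0 ≤ A a := h0 a (Finset.mem_insert_self a s)
    have haB : A a ≤ B := hB a (Finset.mem_insert_self a s)
    have hne : ∀ l ∈ s, l ≠ a := fun l hl => ne_of_mem_of_not_mem hl ha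
    by_cases hcase : c + A a - ∑ l ∈ s, A l ≤ D + B
    · obtain ⟨ε, hε, he1, he2⟩ := ih (c + A a) h0' hB'
        (by rw [hsum] at h1; linarith) hcase
      have hsc : ∑ x ∈ s, Function.update ε a 1 x * A x = ∑ l ∈ s, ε l * A l :=
        Finset.sum_congr rfl fun l hl => by rw [Function.update_of_ne (hne l hl)]
      refine ⟨Function.update ε a 1, ?_, ?_, ?_⟩
      · intro l hl
        rcases Finset.mem_insert.mp hl with rfl | hl
        · left; simp
        · rw [Function.update_of_ne (hne l hl)]; exact hε l hl
      · rw [Finset.sum_insert ha, Function.update_self, hsc]; linarith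
      · rw [Finset.sum_insert ha, Function.update_self, hsc]; linarith
    · push_neg at hcase
      obtain ⟨ε, hε, he1, he2⟩ := ih (c - A a) h0' hB'
        (by linarith) (by rw [hsum] at h2; linarith)
      have hsc : ∑ x ∈ s, Function.update ε a (-1) x * A x = ∑ l ∈ s, ε l * A l :=
        Finset.sum_congr rfl fun l hl => by rw [Function.update_of_ne (hne l hl)]
      refine ⟨Function.update ε a (-1), ?_, ?_, ?_⟩
      · intro l hl
        rcases Finset.mem_insert.mp hl with rfl | hl
        · right; simp
        · rw [Function.update_of_ne (hne l hl)]; exact hε l hl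
      · rw [Finset.sum_insert ha, Function.update_self, hsc]; linarith
      · rw [Finset.sum_insert ha, Function.update_self, hsc]; linarith

/-- If no single term dominates, and `c` does not exceed the total, the torus is hit. -/
lemma hits_of_mid {n : ℕ} (hn : 2 ≤ n) {A C : Fin n → ℝ} {c : ℝ}
    (hA : ∀ j, 0 ≤ A j)
    (h0 : c ≤ ∑ j, A j)
    (h1 : ∀ J, A J ≤ c + ∑ k ∈ Finset.univ.erase J, A k) :
    hits A C c := by
  classical
  -- the largest entry
  obtain ⟨J, -, hJ⟩ := Finset.exists_max_image (Finset.univ : Finset (Fin n)) A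
    ⟨⟨0, by omega⟩, Finset.mem_univ _⟩
  have hJne : (Finset.univ.erase J).Nonempty := by
    rw [← Finset.card_pos, Finset.card_erase_of_mem (Finset.mem_univ _)]
    simp; omega
  obtain ⟨K, hKmem, hK⟩ := Finset.exists_max_image (Finset.univ.erase J) A hJne
  have hKJ : K ≠ J := (Finset.mem_erase.mp hKmem).1
  set T : Finset (Fin n) := (Finset.univ.erase J).erase K with hT
  have hsum1 : ∑ l ∈ T, A l + A K = ∑ k ∈ Finset.univ.erase J, A k :=
    Finset.sum_erase_add _ _ hKmem
  have hsum2 : ∑ k ∈ Finset.univ.erase J, A k + A J = ∑ j, A j :=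
    Finset.sum_erase_add _ _ (Finset.mem_univ _)
  have hTB : ∀ l ∈ T, A l ≤ A K := fun l hl => hK l (Finset.mem_of_mem_erase hl)
  have hT0 : ∀ l ∈ T, 0 ≤ A l := fun l _ => hA l
  have hTs0 : (0:ℝ) ≤ ∑ l ∈ T, A l := Finset.sum_nonneg hT0
  obtain ⟨ε, hε, he1, he2⟩ := walk T A c hT0 hTB
    (by have := h1 J; linarith) (by linarith)
  -- now the pair lemma with w = -(c + Σ_T ε A)
  set w' : ℝ := c + ∑ l ∈ T, ε l * A l with hw'
  have hw'0 : 0 ≤ w' := le_trans (by linarith [hJ K (Finset.mem_univ K)] : (0:ℝ) ≤ A J - A K) he1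
  obtain ⟨p₁, q₁, p₂, q₂, hc1, hc2, hp, hq⟩ :=
    pair (A₁ := A J) (A₂ := A K) (C₁ := C J) (C₂ := C K) (w := -w')
      (by rw [abs_of_nonneg (by linarith [hJ K (Finset.mem_univ K)] : (0:ℝ) ≤ A J - A K),
          abs_neg, abs_of_nonneg hw'0]; exact he1)
      (by rw [abs_neg, abs_of_nonneg hw'0]; exact he2)
  classical
  set p : Fin n → ℝ := Function.update (Function.update (fun l => ε l) J p₁) K p₂ with hpdef
  set q : Fin n → ℝ := Function.update (Function.update (fun _ => (0:ℝ)) J q₁) K q₂ with hqdef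
  have hJK : J ≠ K := fun h => hKJ h.symm
  have hpJ : p J = p₁ := by rw [hpdef, Function.update_of_ne hJK, Function.update_self]
  have hpK : p K = p₂ := by rw [hpdef, Function.update_self]
  have hqJ : q J = q₁ := by rw [hqdef, Function.update_of_ne hJK, Function.update_self]
  have hqK : q K = q₂ := by rw [hqdef, Function.update_self]
  have hpT : ∀ l ∈ T, p l = ε l := by
    intro l hl
    have hlJ : l ≠ J := (Finset.mem_erase.mp (Finset.mem_of_mem_erase hl)).1
    have hlK : l ≠ K := (Finset.mem_erase.mp hl).1
    rw [hpdef, Function.update_of_ne hlK, Function.update_of_ne hlJ]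
  have hqT : ∀ l ∈ T, q l = 0 := by
    intro l hl
    have hlJ : l ≠ J := (Finset.mem_erase.mp (Finset.mem_of_mem_erase hl)).1
    have hlK : l ≠ K := (Finset.mem_erase.mp hl).1
    rw [hqdef, Function.update_of_ne hlK, Function.update_of_ne hlJ]
  refine ⟨p, q, fun l => ?_, ?_, ?_⟩
  · by_cases hlJ : l = J
    · rw [hlJ, hpJ, hqJ]; exact hc1
    · by_cases hlK : l = K
      · rw [hlK, hpK, hqK]; exact hc2
      · have hl : l ∈ T := by
          rw [hT]; exact Finset.mem_erase.mpr ⟨hlK, Finset.mem_erase.mpr ⟨hlJ, Finset.mem_univ l⟩⟩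
        rw [hpT l hl, hqT l hl]
        rcases hε l hl with h | h <;> rw [h] <;> norm_num
  · rw [← Finset.sum_erase_add _ (fun l => A l * p l) (Finset.mem_univ J),
      ← Finset.sum_erase_add _ (fun l => A l * p l) hKmem, ← hT]
    have : ∑ l ∈ T, A l * p l = ∑ l ∈ T, ε l * A l :=
      Finset.sum_congr rfl fun l hl => by rw [hpT l hl]; ring
    rw [this, hpJ, hpK]; linarith
  · rw [← Finset.sum_erase_add _ (fun l => C l * q l) (Finset.mem_univ J),
      ← Finset.sum_erase_add _ (fun l => C l * q l) hKmem, ← hT]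
    have : ∑ l ∈ T, C l * q l = 0 :=
      Finset.sum_eq_zero fun l hl => by rw [hqT l hl]; ring
    rw [this, hqJ, hqK]; linarith

lemma abs_unit (p q : ℝ) (h : p ^ 2 + q ^ 2 = 1) :
    ‖(p : ℂ) + (q : ℂ) * Complex.I‖ = 1 := by
  rw [Complex.norm_def, Complex.normSq_apply]
  simp only [Complex.add_re, Complex.ofReal_re, Complex.mul_re, Complex.I_re, Complex.I_im,
    Complex.ofReal_im, Complex.add_im, Complex.mul_im]
  have : (p + (q * 0 - 0 * 1)) * (p + (q * 0 - 0 * 1)) + (0 + (q * 1 + 0 * 0)) * (0 + (q * 1 + 0 * 0)) = 1 := by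
    nlinarith [h]
  rw [this, Real.sqrt_one]

/-- Triangle inequality certificate: the total is too small. -/
lemma no_hits_small {n : ℕ} {A C : Fin n → ℝ} {c : ℝ}
    (hA : ∀ j, 0 ≤ A j) (h : ∑ j, A j < c) : ¬ hits A C c := by
  rintro ⟨p, q, hcirc, h1, h2⟩
  have hc0 : 0 < c := lt_of_le_of_lt (Finset.sum_nonneg fun j _ => hA j) h
  have habs : |∑ j, A j * p j| ≤ ∑ j, A j := by
    refine le_trans (Finset.abs_sum_le_sum_abs _ _) (Finset.sum_le_sum fun j _ => ?_)
    rw [abs_mul, abs_of_nonneg (hA j)]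
    have hp : |p j| ≤ 1 := by
      rw [abs_le]
      constructor <;> nlinarith [hcirc j, sq_nonneg (q j), sq_nonneg (p j + 1), sq_nonneg (p j - 1)]
    calc A j * |p j| ≤ A j * 1 := mul_le_mul_of_nonneg_left hp (hA j)
    _ = A j := mul_one _
  rw [h1, abs_neg, abs_of_pos hc0] at habs
  linarith

/-- Lopsidedness certificate: one monomial dominates. -/
lemma no_hits_lop {n : ℕ} (J : Fin n) (m l : Fin n → ℝ) {c : ℝ}
    (hm : ∀ k, 0 ≤ m k) (hl : ∀ k, 0 ≤ l k) (hc : 0 ≤ c)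
    (h : c + l J + ∑ k ∈ Finset.univ.erase J, (m k + l k) < m J) :
    ¬ hits (fun k => m k + l k) (fun k => m k - l k) c := by
  rintro ⟨p, q, hcirc, h1, h2⟩
  set u : Fin n → ℂ := fun k => (p k : ℂ) + (q k : ℂ) * Complex.I with hu
  set w : Fin n → ℂ := fun k => (p k : ℂ) - (q k : ℂ) * Complex.I with hw
  have hu1 : ∀ k, ‖u k‖ = 1 := fun k => abs_unit _ _ (hcirc k)
  have hw1 : ∀ k, ‖w k‖ = 1 := by
    intro k
    have : w k = (p k : ℂ) + (-(q k) : ℝ) * Complex.I := by rw [hw]; push_cast; ring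
    rw [this]; exact abs_unit _ _ (by nlinarith [hcirc k])
  set z : Fin n → ℂ := fun k => (m k : ℂ) * u k + (l k : ℂ) * w k with hz
  have hzre : ∀ k, (z k).re = (m k + l k) * p k := by
    intro k
    simp [hz, hu, hw, Complex.mul_re, Complex.add_re, Complex.sub_re, Complex.mul_im]
    ring
  have hzim : ∀ k, (z k).im = (m k - l k) * q k := by
    intro k
    simp [hz, hu, hw, Complex.mul_re, Complex.add_im, Complex.sub_im, Complex.mul_im]
    ring
  have hzsum : ∑ k, z k = -(c : ℂ) := by
    apply Complex.ext
    · rw [Complex.re_sum]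
      simp only [hzre]
      simpa using h1
    · rw [Complex.im_sum]
      simp only [hzim]
      simpa using h2
  have hzabs : ∀ k, ‖z k‖ ≤ m k + l k := by
    intro k
    refine le_trans (norm_add_le _ _) ?_
    simp only [norm_mul, Complex.norm_real, Real.norm_eq_abs, hu1, hw1, abs_of_nonneg (hm k),
      abs_of_nonneg (hl k), mul_one, le_refl]
  have hJ1 : m J ≤ ‖z J‖ + l J := by
    have : (m J : ℂ) * u J = z J - (l J : ℂ) * w J := by rw [hz]; ring
    have hm1 : ‖(m J : ℂ) * u J‖ = m J := by
      rw [norm_mul, Complex.norm_real, Real.norm_eq_abs, hu1, abs_of_nonneg (hm J), mul_one]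
    calc m J = ‖z J - (l J : ℂ) * w J‖ := by rw [← this, hm1]
    _ ≤ ‖z J‖ + ‖(l J : ℂ) * w J‖ := norm_sub_le _ _
    _ = ‖z J‖ + l J := by
        rw [norm_mul, Complex.norm_real, Real.norm_eq_abs, hw1, abs_of_nonneg (hl J), mul_one]
  have hJ2 : ‖z J‖ ≤ c + ∑ k ∈ Finset.univ.erase J, (m k + l k) := by
    have hJz : z J = -(c:ℂ) - ∑ k ∈ Finset.univ.erase J, z k := by
      rw [← hzsum, ← Finset.sum_erase_add _ _ (Finset.mem_univ J)]; ring
    rw [hJz]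
    refine le_trans (norm_sub_le _ _) ?_
    have h1' : ‖-(c:ℂ)‖ = c := by
      rw [norm_neg, Complex.norm_real, Real.norm_eq_abs, abs_of_nonneg hc]
    have h2' : ‖∑ k ∈ Finset.univ.erase J, z k‖ ≤
        ∑ k ∈ Finset.univ.erase J, (m k + l k) :=
      le_trans (norm_sum_le _ _)
        (Finset.sum_le_sum fun k _ => hzabs k)
    rw [h1']
    linarith
  linarith

/-- If the linking coefficient vanishes and the dominant axis is long enough, the torus is hit. -/
lemma hits_of_CJ_eq_zero {n : ℕ} (J : Fin n) {A C : Fin n → ℝ} {c : ℝ}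
    (hAJ : 0 < A J) (hCJ : C J = 0)
    (h1 : |(∑ k ∈ Finset.univ.erase J, A k) - c| ≤ A J) :
    hits A C c := by
  classical
  set S' : ℝ := ∑ k ∈ Finset.univ.erase J, A k with hS'
  set pJ : ℝ := (S' - c) / A J with hpJ
  have hpJ1 : pJ ^ 2 ≤ 1 := by
    rw [hpJ, div_pow, div_le_one (by positivity)]
    nlinarith [h1, abs_nonneg (S' - c), sq_abs (S' - c), le_abs_self (S' - c), neg_abs_le (S' - c)]
  set qJ : ℝ := Real.sqrt (1 - pJ ^ 2) with hqJ
  refine ⟨Function.update (fun _ => (-1 : ℝ)) J pJ, Function.update (fun _ => (0:ℝ)) J qJ,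
    fun k => ?_, ?_, ?_⟩
  · by_cases hk : k = J
    · rw [hk, Function.update_self, Function.update_self, hqJ,
        Real.sq_sqrt (by linarith : (0:ℝ) ≤ 1 - pJ ^ 2)]
      ring
    · rw [Function.update_of_ne hk, Function.update_of_ne hk]; norm_num
  · rw [← Finset.sum_erase_add _ _ (Finset.mem_univ J), Function.update_self]
    have : ∑ k ∈ Finset.univ.erase J, A k * Function.update (fun _ => (-1:ℝ)) J pJ k
        = -S' := by
      rw [hS', ← Finset.sum_neg_distrib]
      refine Finset.sum_congr rfl fun k hk => ?_
      rw [Function.update_of_ne (Finset.mem_erase.mp hk).1]; ring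
    rw [this, hpJ, mul_div_cancel₀ _ (ne_of_gt hAJ)]; ring
  · rw [← Finset.sum_erase_add _ _ (Finset.mem_univ J), Function.update_self]
    have : ∑ k ∈ Finset.univ.erase J, C k * Function.update (fun _ => (0:ℝ)) J qJ k = 0 := by
      refine Finset.sum_eq_zero fun k hk => ?_
      rw [Function.update_of_ne (Finset.mem_erase.mp hk).1]; ring
    rw [this, hCJ]; ring

lemma exists_angle (p q : ℝ) (h : p ^ 2 + q ^ 2 = 1) :
    ∃ θ : ℝ, Real.cos θ = p ∧ Real.sin θ = q := by
  have hp : -1 ≤ p ∧ p ≤ 1 := by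
    constructor <;> nlinarith [sq_nonneg q, sq_nonneg (p + 1), sq_nonneg (p - 1)]
  have hs : Real.sin (Real.arccos p) = |q| := by
    rw [Real.sin_arccos]
    have : 1 - p ^ 2 = q ^ 2 := by linarith
    rw [this, Real.sqrt_sq_eq_abs]
  rcases le_or_gt 0 q with hq | hq
  · exact ⟨Real.arccos p, Real.cos_arccos hp.1 hp.2, by rw [hs, abs_of_nonneg hq]⟩
  · refine ⟨-Real.arccos p, ?_, ?_⟩
    · rw [Real.cos_neg]; exact Real.cos_arccos hp.1 hp.2
    · rw [Real.sin_neg, hs, abs_of_neg hq, neg_neg]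

/-- Key monotonicity: enlarging the dominant ellipse keeps the point outside the amoeba. -/
lemma no_hits_mono {n : ℕ} {A C A' C' : Fin n → ℝ} {c : ℝ} (J : Fin n)
    (hc : 0 < c) (hA0 : ∀ k, 0 ≤ A k)
    (hdom : c + ∑ k ∈ Finset.univ.erase J, A k < A J)
    (hCJ : C J ≠ 0)
    (hAJ' : A J ≤ A' J) (hCJ' : |C J| ≤ |C' J|)
    (hAk : ∀ k, k ≠ J → A' k = A k) (hCk : ∀ k, k ≠ J → C' k = C k)
    (h : ¬ hits A C c) : ¬ hits A' C' c := by
  rintro ⟨p, q, hcirc, h1, h2⟩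
  apply h
  have hS0 : (0:ℝ) ≤ ∑ k ∈ Finset.univ.erase J, A k :=
    Finset.sum_nonneg fun k _ => hA0 k
  have hAJpos : 0 < A J := by linarith
  have hAJ'pos : 0 < A' J := by linarith
  have hCJpos : 0 < |C J| := abs_pos.mpr hCJ
  have hCJ'pos : 0 < |C' J| := lt_of_lt_of_le hCJpos hCJ'
  have hCJ'ne : C' J ≠ 0 := fun hh => by simp [hh] at hCJ'pos
  set G : (Fin n → ℝ) → ℝ := fun θ =>
    ((c + ∑ k ∈ Finset.univ.erase J, A k * Real.cos (θ k)) / A J) ^ 2 +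
    ((∑ k ∈ Finset.univ.erase J, C k * Real.sin (θ k)) / C J) ^ 2 with hG
  have hGcont : Continuous G := by
    apply Continuous.add
    · apply Continuous.pow
      apply Continuous.div_const
      apply Continuous.add continuous_const
      exact continuous_finset_sum _ fun k _ =>
        continuous_const.mul (Real.continuous_cos.comp (continuous_apply k))
    · apply Continuous.pow
      apply Continuous.div_const
      exact continuous_finset_sum _ fun k _ =>
        continuous_const.mul (Real.continuous_sin.comp (continuous_apply k))
  set θ₀ : Fin n → ℝ := fun _ => Real.pi with hθ₀
  have hGθ₀ : G θ₀ < 1 := by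
    have e1 : ∑ k ∈ Finset.univ.erase J, A k * Real.cos (θ₀ k)
        = -∑ k ∈ Finset.univ.erase J, A k := by
      rw [← Finset.sum_neg_distrib]
      exact Finset.sum_congr rfl fun k _ => by rw [hθ₀]; simp
    have e2 : ∑ k ∈ Finset.univ.erase J, C k * Real.sin (θ₀ k) = 0 :=
      Finset.sum_eq_zero fun k _ => by rw [hθ₀]; simp
    rw [hG]
    simp only [e1, e2, zero_div, ne_eq]
    rw [zero_pow (by norm_num), add_zero, div_pow, div_lt_one (by positivity)]
    nlinarith
  -- angles from the given hit of the enlarged data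
  have hθ' : ∃ θ' : Fin n → ℝ, ∀ k, Real.cos (θ' k) = p k ∧ Real.sin (θ' k) = q k := by
    choose f hf1 hf2 using fun k => exists_angle (p k) (q k) (hcirc k)
    exact ⟨f, fun k => ⟨hf1 k, hf2 k⟩⟩
  obtain ⟨θ', hθ'c⟩ := hθ'
  have hGθ' : 1 ≤ G θ' := by
    have eA : ∑ k ∈ Finset.univ.erase J, A k * Real.cos (θ' k)
        = ∑ k ∈ Finset.univ.erase J, A' k * p k :=
      Finset.sum_congr rfl fun k hk => by
        rw [(hθ'c k).1, hAk k (Finset.mem_erase.mp hk).1]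
    have eC : ∑ k ∈ Finset.univ.erase J, C k * Real.sin (θ' k)
        = ∑ k ∈ Finset.univ.erase J, C' k * q k :=
      Finset.sum_congr rfl fun k hk => by
        rw [(hθ'c k).2, hCk k (Finset.mem_erase.mp hk).1]
    have hps : A' J * p J = -(c + ∑ k ∈ Finset.univ.erase J, A' k * p k) := by
      have h' := Finset.sum_erase_add Finset.univ (fun k => A' k * p k) (Finset.mem_univ J)
      rw [h1] at h'
      have h'' : ∑ x ∈ Finset.univ.erase J, A' x * p x + A' J * p J = -c := h'
      linarith
    have hqs : C' J * q J = -(∑ k ∈ Finset.univ.erase J, C' k * q k) := by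
      have h' := Finset.sum_erase_add Finset.univ (fun k => C' k * q k) (Finset.mem_univ J)
      rw [h2] at h'
      have h'' : ∑ x ∈ Finset.univ.erase J, C' x * q x + C' J * q J = 0 := h'
      linarith
    have hpJ : p J = -(c + ∑ k ∈ Finset.univ.erase J, A' k * p k) / A' J := by
      field_simp at hps ⊢; linarith
    have hqJ : q J = -(∑ k ∈ Finset.univ.erase J, C' k * q k) / C' J := by
      field_simp [hCJ'ne] at hqs ⊢; linarith [hqs]
    have hG1 : ((c + ∑ k ∈ Finset.univ.erase J, A' k * p k) / A' J) ^ 2 +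
        ((∑ k ∈ Finset.univ.erase J, C' k * q k) / C' J) ^ 2 = 1 := by
      have := hcirc J
      rw [hpJ, hqJ] at this
      rw [← this, neg_div, neg_div]; ring
    rw [hG]
    simp only [eA, eC]
    set X := c + ∑ k ∈ Finset.univ.erase J, A' k * p k
    set Y := ∑ k ∈ Finset.univ.erase J, C' k * q k
    have m1 : (X / A' J) ^ 2 ≤ (X / A J) ^ 2 := by
      rw [div_pow, div_pow]
      exact div_le_div_of_nonneg_left (sq_nonneg X) (by positivity)
        (by nlinarith)
    have m2 : (Y / C' J) ^ 2 ≤ (Y / C J) ^ 2 := by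
      rw [div_pow, div_pow]
      refine div_le_div_of_nonneg_left (sq_nonneg Y) (by positivity) ?_
      nlinarith [sq_abs (C J), sq_abs (C' J), hCJpos, hCJ', mul_self_le_mul_self (le_of_lt hCJpos) hCJ']
    linarith [hG1]
  obtain ⟨θs, -, hGs⟩ :=
    (isPreconnected_univ (α := Fin n → ℝ)).intermediate_value (Set.mem_univ θ₀)
      (Set.mem_univ θ') hGcont.continuousOn ⟨le_of_lt hGθ₀, hGθ'⟩
  -- build a hit for the original data
  classical
  set X := c + ∑ k ∈ Finset.univ.erase J, A k * Real.cos (θs k) with hX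
  set Y := ∑ k ∈ Finset.univ.erase J, C k * Real.sin (θs k) with hY
  refine ⟨Function.update (fun k => Real.cos (θs k)) J (-X / A J),
    Function.update (fun k => Real.sin (θs k)) J (-Y / C J), fun k => ?_, ?_, ?_⟩
  · by_cases hk : k = J
    · rw [hk, Function.update_self, Function.update_self]
      have : (-X / A J) ^ 2 + (-Y / C J) ^ 2 = G θs := by
        simp only [hG]
        rw [← hX, ← hY]; ring
      rw [this, hGs]
    · rw [Function.update_of_ne hk, Function.update_of_ne hk]
      rw [← Real.sin_sq_add_cos_sq (θs k)]; ring
  · rw [← Finset.sum_erase_add _ _ (Finset.mem_univ J), Function.update_self]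
    have : ∑ k ∈ Finset.univ.erase J, A k * Function.update (fun k => Real.cos (θs k)) J (-X / A J) k
        = ∑ k ∈ Finset.univ.erase J, A k * Real.cos (θs k) :=
      Finset.sum_congr rfl fun k hk => by
        rw [Function.update_of_ne (Finset.mem_erase.mp hk).1]
    rw [this, mul_comm, div_mul_cancel₀ _ (ne_of_gt hAJpos)]
    rw [hX]; ring
  · rw [← Finset.sum_erase_add _ _ (Finset.mem_univ J), Function.update_self]
    have : ∑ k ∈ Finset.univ.erase J, C k * Function.update (fun k => Real.sin (θs k)) J (-Y / C J) k
        = ∑ k ∈ Finset.univ.erase J, C k * Real.sin (θs k) :=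
      Finset.sum_congr rfl fun k hk => by
        rw [Function.update_of_ne (Finset.mem_erase.mp hk).1]
    rw [this, mul_comm, div_mul_cancel₀ _ hCJ]
    rw [hY]; ring

lemma exp_key {t : ℝ} (ht : 0 ≤ t) : 1 - Real.exp (-t) ≤ Real.exp t - 1 := by
  have hx : (0:ℝ) < Real.exp t := Real.exp_pos t
  have h1 : 1 ≤ Real.exp t := Real.one_le_exp ht
  rw [Real.exp_neg]
  have h2 : Real.exp t * (Real.exp t)⁻¹ = 1 := mul_inv_cancel₀ (ne_of_gt hx)
  have h3 : (0:ℝ) < (Real.exp t)⁻¹ := inv_pos.mpr hx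
  nlinarith [sq_nonneg (Real.exp t - 1)]

lemma up_mono {a b s t : ℝ} (ha : 0 < a) (hb : 0 < b) (hst : s ≤ t)
    (hγ : 0 ≤ a * Real.exp s - b * Real.exp (-s)) :
    a * Real.exp s + b * Real.exp (-s) ≤ a * Real.exp t + b * Real.exp (-t) ∧
    a * Real.exp s - b * Real.exp (-s) ≤ a * Real.exp t - b * Real.exp (-t) := by
  have hu : 0 ≤ t - s := by linarith
  have het : Real.exp t = Real.exp s * Real.exp (t - s) := by
    rw [← Real.exp_add]; ring_nf
  have hemt : Real.exp (-t) = Real.exp (-s) * Real.exp (-(t - s)) := by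
    rw [← Real.exp_add]; ring_nf
  have hkey := exp_key hu
  have h1 : Real.exp (-(t - s)) ≤ 1 := by
    rw [← Real.exp_zero]; exact Real.exp_le_exp.mpr (by linarith)
  have h2 : 1 ≤ Real.exp (t - s) := Real.one_le_exp hu
  have hs1 : 0 < Real.exp s := Real.exp_pos s
  have hs2 : 0 < Real.exp (-s) := Real.exp_pos (-s)
  constructor
  · rw [het, hemt]
    have k1 : b * Real.exp (-s) * (1 - Real.exp (-(t - s))) ≤
        a * Real.exp s * (Real.exp (t - s) - 1) := by
      apply mul_le_mul (by linarith) hkey (by linarith) (by nlinarith)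
    nlinarith
  · rw [het, hemt]
    nlinarith [mul_nonneg (mul_nonneg ha.le hs1.le) (by linarith : (0:ℝ) ≤ Real.exp (t-s) - 1),
      mul_nonneg (mul_nonneg hb.le hs2.le) (by linarith : (0:ℝ) ≤ 1 - Real.exp (-(t-s)))]

lemma down_mono {a b s t : ℝ} (ha : 0 < a) (hb : 0 < b) (hst : t ≤ s)
    (hγ : a * Real.exp s - b * Real.exp (-s) ≤ 0) :
    a * Real.exp s + b * Real.exp (-s) ≤ a * Real.exp t + b * Real.exp (-t) ∧
    a * Real.exp t - b * Real.exp (-t) ≤ a * Real.exp s - b * Real.exp (-s) := by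
  have h := up_mono hb ha (neg_le_neg hst) (by rw [neg_neg]; linarith)
  simp only [neg_neg] at h
  exact ⟨by linarith [h.1], by linarith [h.2]⟩

section Geometry

variable {n : ℕ}

/-- `Af a b ξ j` is the length of the major semi-axis of the `j`-th ellipse. -/
noncomputable def Af (a b ξ : Fin n → ℝ) : Fin n → ℝ := fun j => a j * Real.exp (ξ j) + b j * Real.exp (-ξ j)

/-- `Cf a b ξ j` is the (signed) length of the minor semi-axis of the `j`-th ellipse. -/
noncomputable def Cf (a b ξ : Fin n → ℝ) : Fin n → ℝ := fun j => a j * Real.exp (ξ j) - b j * Real.exp (-ξ j)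

/-- The complement of the amoeba, in coordinates. -/
def Sset (a b : Fin n → ℝ) (c : ℝ) : Set (Fin n → ℝ) := {ξ | ¬ hits (Af a b ξ) (Cf a b ξ) c}

/-- Candidate component of order `0`. -/
def U0 (a b : Fin n → ℝ) (c : ℝ) : Set (Fin n → ℝ) := {ξ | ∑ j, Af a b ξ j < c}

/-- Region where the `J`-th ellipse dominates. -/
def Vs (a b : Fin n → ℝ) (c : ℝ) (J : Fin n) : Set (Fin n → ℝ) :=
  {ξ | c + ∑ k ∈ Finset.univ.erase J, Af a b ξ k < Af a b ξ J}

/-- Lopsided region of order `e_J`. -/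
def Up (a b : Fin n → ℝ) (c : ℝ) (J : Fin n) : Set (Fin n → ℝ) :=
  {ξ | c + b J * Real.exp (-ξ J) + ∑ k ∈ Finset.univ.erase J, Af a b ξ k < a J * Real.exp (ξ J)}

/-- Candidate component of order `e_J`. -/
def Sp (a b : Fin n → ℝ) (c : ℝ) (J : Fin n) : Set (Fin n → ℝ) :=
  Sset a b c ∩ Vs a b c J ∩ {ξ | 0 < Cf a b ξ J}

/-- Candidate component of order `-e_J`. -/
def Sm (a b : Fin n → ℝ) (c : ℝ) (J : Fin n) : Set (Fin n → ℝ) :=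
  Sset a b c ∩ Vs a b c J ∩ {ξ | Cf a b ξ J < 0}

variable {a b : Fin n → ℝ} {c : ℝ}

lemma Af_pos (ha : ∀ j, 0 < a j) (hb : ∀ j, 0 < b j) (ξ : Fin n → ℝ) (j : Fin n) :
    0 < Af a b ξ j := by
  have h1 := Real.exp_pos (ξ j); have h2 := Real.exp_pos (-ξ j)
  exact add_pos (mul_pos (ha j) h1) (mul_pos (hb j) h2)

lemma sum_erase_Af_nonneg (ha : ∀ j, 0 < a j) (hb : ∀ j, 0 < b j) (ξ : Fin n → ℝ) (J : Fin n) :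
    0 ≤ ∑ k ∈ Finset.univ.erase J, Af a b ξ k :=
  Finset.sum_nonneg fun k _ => (Af_pos ha hb ξ k).le

lemma U0_subset_S (ha : ∀ j, 0 < a j) (hb : ∀ j, 0 < b j) : U0 a b c ⊆ Sset a b c :=
  fun ξ hξ => no_hits_small (fun j => (Af_pos ha hb ξ j).le) hξ

lemma Up_subset_S (ha : ∀ j, 0 < a j) (hb : ∀ j, 0 < b j) (hc : 0 < c) (J : Fin n) :
    Up a b c J ⊆ Sset a b c := by
  intro ξ hξ
  have := no_hits_lop (c := c) J (fun k => a k * Real.exp (ξ k)) (fun k => b k * Real.exp (-ξ k))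
    (fun k => (mul_pos (ha k) (Real.exp_pos _)).le)
    (fun k => (mul_pos (hb k) (Real.exp_pos _)).le) hc.le ?_
  · exact this
  · exact hξ

lemma Up_subset_V (hc : 0 < c) (J : Fin n) (hb : ∀ j, 0 < b j) :
    Up a b c J ⊆ Vs a b c J := by
  intro ξ hξ
  have h : c + b J * Real.exp (-ξ J) + ∑ k ∈ Finset.univ.erase J, Af a b ξ k
      < a J * Real.exp (ξ J) := hξ
  have hbJ : 0 < b J * Real.exp (-ξ J) := by have := hb J; positivity
  have hAfJ : Af a b ξ J = a J * Real.exp (ξ J) + b J * Real.exp (-ξ J) := rfl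
  show c + ∑ k ∈ Finset.univ.erase J, Af a b ξ k < Af a b ξ J
  rw [hAfJ]; linarith

lemma Up_subset_Cpos (hc : 0 < c) (J : Fin n) (ha : ∀ j, 0 < a j) (hb : ∀ j, 0 < b j)
    (ξ : Fin n → ℝ) (hξ : ξ ∈ Up a b c J) : 0 < Cf a b ξ J := by
  have h : c + b J * Real.exp (-ξ J) + ∑ k ∈ Finset.univ.erase J, Af a b ξ k
      < a J * Real.exp (ξ J) := hξ
  have := sum_erase_Af_nonneg ha hb ξ J
  show 0 < a J * Real.exp (ξ J) - b J * Real.exp (-ξ J)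
  linarith

lemma Up_subset_Sp (ha : ∀ j, 0 < a j) (hb : ∀ j, 0 < b j) (hc : 0 < c) (J : Fin n) :
    Up a b c J ⊆ Sp a b c J := fun ξ hξ =>
  ⟨⟨Up_subset_S ha hb hc J hξ, Up_subset_V hc J hb hξ⟩, Up_subset_Cpos hc J ha hb ξ hξ⟩

lemma S_cover (hn : 2 ≤ n) (ha : ∀ j, 0 < a j) (hb : ∀ j, 0 < b j) {ξ : Fin n → ℝ}
    (h : ξ ∈ Sset a b c) : ξ ∈ U0 a b c ∨ ∃ J, ξ ∈ Vs a b c J := by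
  by_contra hcon
  push_neg at hcon
  obtain ⟨h0, h1⟩ := hcon
  refine h (hits_of_mid hn (fun j => (Af_pos ha hb ξ j).le) (le_of_not_gt h0) fun J => ?_)
  exact le_of_not_gt (h1 J)

lemma S_V_Cne (hc : 0 < c) (ha : ∀ j, 0 < a j) (hb : ∀ j, 0 < b j) {ξ : Fin n → ℝ} {J : Fin n}
    (hS : ξ ∈ Sset a b c) (hV : ξ ∈ Vs a b c J) : Cf a b ξ J ≠ 0 := by
  intro hC
  refine hS (hits_of_CJ_eq_zero J ?_ hC ?_)
  · have := sum_erase_Af_nonneg ha hb ξ J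
    have hV' : c + ∑ k ∈ Finset.univ.erase J, Af a b ξ k < Af a b ξ J := hV
    linarith
  · have hs := sum_erase_Af_nonneg ha hb ξ J
    have hV' : c + ∑ k ∈ Finset.univ.erase J, Af a b ξ k < Af a b ξ J := hV
    rw [abs_le]
    constructor <;> linarith

lemma U0_disj_V (hc : 0 < c) (ha : ∀ j, 0 < a j) (hb : ∀ j, 0 < b j) {ξ : Fin n → ℝ} {J : Fin n}
    (h0 : ξ ∈ U0 a b c) (hV : ξ ∈ Vs a b c J) : False := by
  have h0' : ∑ j, Af a b ξ j < c := h0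
  have hV' : c + ∑ k ∈ Finset.univ.erase J, Af a b ξ k < Af a b ξ J := hV
  have := Finset.sum_erase_add Finset.univ (Af a b ξ) (Finset.mem_univ J)
  have hs := sum_erase_Af_nonneg ha hb ξ J
  linarith

lemma V_disj (hc : 0 < c) (ha : ∀ j, 0 < a j) (hb : ∀ j, 0 < b j) {ξ : Fin n → ℝ} {J K : Fin n}
    (hJK : J ≠ K) (hJ : ξ ∈ Vs a b c J) (hK : ξ ∈ Vs a b c K) : False := by
  have hJ' : c + ∑ k ∈ Finset.univ.erase J, Af a b ξ k < Af a b ξ J := hJ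
  have hK' : c + ∑ k ∈ Finset.univ.erase K, Af a b ξ k < Af a b ξ K := hK
  have h1 : Af a b ξ K ≤ ∑ k ∈ Finset.univ.erase J, Af a b ξ k :=
    Finset.single_le_sum (fun k _ => (Af_pos ha hb ξ k).le)
      (Finset.mem_erase.mpr ⟨hJK.symm, Finset.mem_univ K⟩)
  have h2 : Af a b ξ J ≤ ∑ k ∈ Finset.univ.erase K, Af a b ξ k :=
    Finset.single_le_sum (fun k _ => (Af_pos ha hb ξ k).le)
      (Finset.mem_erase.mpr ⟨hJK, Finset.mem_univ J⟩)
  linarith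

lemma Af_update (ha : ∀ j, 0 < a j) {ξ : Fin n → ℝ} {J : Fin n} (s : ℝ) :
    ∀ k, k ≠ J → Af a b (Function.update ξ J s) k = Af a b ξ k := by
  intro k hk
  simp only [Af, Function.update_of_ne hk]

lemma Cf_update {ξ : Fin n → ℝ} {J : Fin n} (s : ℝ) :
    ∀ k, k ≠ J → Cf a b (Function.update ξ J s) k = Cf a b ξ k := by
  intro k hk
  simp only [Cf, Function.update_of_ne hk]

lemma sum_erase_Af_update {ξ : Fin n → ℝ} {J : Fin n} (s : ℝ) :
    ∑ k ∈ Finset.univ.erase J, Af a b (Function.update ξ J s) k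
      = ∑ k ∈ Finset.univ.erase J, Af a b ξ k :=
  Finset.sum_congr rfl fun k hk => by
    simp only [Af, Function.update_of_ne (Finset.mem_erase.mp hk).1]

/-- The upward flow in direction `e_J` stays in `Sp`. -/
lemma flow_plus (ha : ∀ j, 0 < a j) (hb : ∀ j, 0 < b j) (hc : 0 < c) {ξ : Fin n → ℝ} {J : Fin n}
    (hξ : ξ ∈ Sp a b c J) {s : ℝ} (hs : ξ J ≤ s) : Function.update ξ J s ∈ Sp a b c J := by
  obtain ⟨⟨hS, hV⟩, hC⟩ := hξ
  have hC' : (0:ℝ) < Cf a b ξ J := hC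
  have hmono := up_mono (ha J) (hb J) hs (by
    have : (0:ℝ) < a J * Real.exp (ξ J) - b J * Real.exp (-ξ J) := hC'
    linarith)
  have hAJ : Af a b ξ J ≤ Af a b (Function.update ξ J s) J := by
    simp only [Af, Function.update_self]; exact hmono.1
  have hCJ : Cf a b ξ J ≤ Cf a b (Function.update ξ J s) J := by
    simp only [Cf, Function.update_self]; exact hmono.2
  have hCpos' : 0 < Cf a b (Function.update ξ J s) J := lt_of_lt_of_le hC' hCJ
  have hV' : c + ∑ k ∈ Finset.univ.erase J, Af a b ξ k < Af a b ξ J := hV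
  refine ⟨⟨?_, ?_⟩, hCpos'⟩
  · -- not hits
    show ¬ hits (Af a b (Function.update ξ J s)) (Cf a b (Function.update ξ J s)) c
    refine no_hits_mono J hc (fun k => (Af_pos ha hb ξ k).le) hV'
      (ne_of_gt hC') hAJ ?_ (fun k hk => Af_update ha s k hk) (fun k hk => Cf_update s k hk) hS
    rw [abs_of_pos hC', abs_of_pos hCpos']; exact hCJ
  · show c + ∑ k ∈ Finset.univ.erase J, Af a b (Function.update ξ J s) k
        < Af a b (Function.update ξ J s) J
    rw [sum_erase_Af_update]
    linarith

/-- Along the upward flow one eventually reaches the lopsided region `Up`. -/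
lemma flow_reach_plus (ha : ∀ j, 0 < a j) (hb : ∀ j, 0 < b j) (hc : 0 < c)
    (ξ : Fin n → ℝ) (J : Fin n) :
    ∃ s : ℝ, ξ J ≤ s ∧ Function.update ξ J s ∈ Up a b c J := by
  set Q : ℝ := c + b J + ∑ k ∈ Finset.univ.erase J, Af a b ξ k with hQ
  have hQpos : 0 < Q := by
    have := sum_erase_Af_nonneg ha hb ξ J
    have := hb J
    rw [hQ]; linarith
  set s : ℝ := max (ξ J) (max 0 (Real.log (Q / a J) + 1)) with hs
  have hs0 : 0 ≤ s := le_trans (le_max_left 0 _) (le_max_right (ξ J) _)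
  have hsl : Real.log (Q / a J) + 1 ≤ s :=
    le_trans (le_max_right 0 _) (le_max_right (ξ J) _)
  refine ⟨s, le_max_left _ _, ?_⟩
  show c + b J * Real.exp (-(Function.update ξ J s) J) +
      ∑ k ∈ Finset.univ.erase J, Af a b (Function.update ξ J s) k <
      a J * Real.exp ((Function.update ξ J s) J)
  rw [Function.update_self, sum_erase_Af_update]
  have h1 : b J * Real.exp (-s) ≤ b J := by
    have : Real.exp (-s) ≤ 1 := by
      rw [← Real.exp_zero]; exact Real.exp_le_exp.mpr (by linarith)
    nlinarith [hb J]
  have h2 : Q < a J * Real.exp s := by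
    have hl : Real.exp (Real.log (Q / a J) + 1) ≤ Real.exp s := Real.exp_le_exp.mpr hsl
    rw [Real.exp_add, Real.exp_log (div_pos hQpos (ha J))] at hl
    have he : (1:ℝ) < Real.exp 1 := by
      have := Real.add_one_le_exp 1; linarith
    have hqa : (0:ℝ) < Q / a J := div_pos hQpos (ha J)
    have h4 : Q / a J < Real.exp s := by nlinarith
    have h5 : a J * (Q / a J) < a J * Real.exp s := mul_lt_mul_of_pos_left h4 (ha J)
    rwa [mul_div_cancel₀ Q (ne_of_gt (ha J))] at h5
  rw [hQ] at h2
  have := sum_erase_Af_nonneg ha hb ξ J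
  linarith

end Geometry

section Connect

variable {n : ℕ} {a b : Fin n → ℝ} {c : ℝ}

lemma joinedIn_segment {U : Set (Fin n → ℝ)} {x y : Fin n → ℝ}
    (h : ∀ t : ℝ, 0 ≤ t → t ≤ 1 → (fun k => (1 - t) * x k + t * y k) ∈ U) :
    JoinedIn U x y := by
  have hx : (fun k => (1 - (0:ℝ)) * x k + (0:ℝ) * y k) = x := by funext k; ring
  have hy : (fun k => (1 - (1:ℝ)) * x k + (1:ℝ) * y k) = y := by funext k; ring
  refine ⟨⟨⟨fun t => fun k => (1 - (t:ℝ)) * x k + (t:ℝ) * y k, ?_⟩, ?_, ?_⟩, ?_⟩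
  · apply continuous_pi; intro k
    have hc : Continuous fun t : unitInterval => (t : ℝ) := continuous_subtype_val
    exact ((continuous_const.sub hc).mul continuous_const).add (hc.mul continuous_const)
  · show (fun k => (1 - ((0: unitInterval):ℝ)) * x k + ((0:unitInterval):ℝ) * y k) = x
    rw [Set.Icc.coe_zero]; exact hx
  · show (fun k => (1 - ((1: unitInterval):ℝ)) * x k + ((1:unitInterval):ℝ) * y k) = y
    rw [Set.Icc.coe_one]; exact hy
  · intro t; exact h (t:ℝ) t.2.1 t.2.2

lemma conv_exp_le {u v : ℝ} {t : ℝ} (ht0 : 0 ≤ t) (ht1 : t ≤ 1) :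
    Real.exp ((1 - t) * u + t * v) ≤ max (Real.exp u) (Real.exp v) := by
  have h1 : (1 - t) * u + t * v ≤ max u v := by
    nlinarith [le_max_left u v, le_max_right u v]
  calc Real.exp ((1 - t) * u + t * v) ≤ Real.exp (max u v) := Real.exp_le_exp.mpr h1
  _ = max (Real.exp u) (Real.exp v) := Real.exp_monotone.map_max

/-- Bound for `Af` along a segment. -/
lemma Af_seg_le (ha : ∀ j, 0 < a j) (hb : ∀ j, 0 < b j) (x y : Fin n → ℝ) {t : ℝ}
    (ht0 : 0 ≤ t) (ht1 : t ≤ 1) (k : Fin n) :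
    Af a b (fun k => (1 - t) * x k + t * y k) k ≤
      max (a k * Real.exp (x k)) (a k * Real.exp (y k)) +
      max (b k * Real.exp (-x k)) (b k * Real.exp (-y k)) := by
  have e1 : a k * Real.exp ((1 - t) * x k + t * y k)
      ≤ max (a k * Real.exp (x k)) (a k * Real.exp (y k)) := by
    calc a k * Real.exp ((1 - t) * x k + t * y k)
        ≤ a k * max (Real.exp (x k)) (Real.exp (y k)) :=
          mul_le_mul_of_nonneg_left (conv_exp_le ht0 ht1) (ha k).le
    _ = max (a k * Real.exp (x k)) (a k * Real.exp (y k)) :=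
          (mul_max_of_nonneg _ _ (ha k).le)
  have h2 : -((1 - t) * x k + t * y k) = (1 - t) * (-x k) + t * (-y k) := by ring
  have e2 : b k * Real.exp (-((1 - t) * x k + t * y k))
      ≤ max (b k * Real.exp (-x k)) (b k * Real.exp (-y k)) := by
    rw [h2]
    calc b k * Real.exp ((1 - t) * (-x k) + t * (-y k))
        ≤ b k * max (Real.exp (-x k)) (Real.exp (-y k)) :=
          mul_le_mul_of_nonneg_left (conv_exp_le ht0 ht1) (hb k).le
    _ = max (b k * Real.exp (-x k)) (b k * Real.exp (-y k)) :=
          (mul_max_of_nonneg _ _ (hb k).le)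
  have : Af a b (fun k => (1 - t) * x k + t * y k) k =
      a k * Real.exp ((1 - t) * x k + t * y k) +
      b k * Real.exp (-((1 - t) * x k + t * y k)) := rfl
  rw [this]; exact add_le_add e1 e2

/-- Vertical segments (in direction `e_J`) stay in `Up`. -/
lemma Up_seg_vert (ha : ∀ j, 0 < a j) (hb : ∀ j, 0 < b j) {J : Fin n} {x : Fin n → ℝ}
    (hx : x ∈ Up a b c J) {T : ℝ} (hT : x J ≤ T) {t : ℝ} (ht0 : 0 ≤ t) (ht1 : t ≤ 1) :
    (fun k => (1 - t) * x k + t * Function.update x J T k) ∈ Up a b c J := by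
  set z : Fin n → ℝ := fun k => (1 - t) * x k + t * Function.update x J T k with hz
  have hzk : ∀ k, k ≠ J → z k = x k := by
    intro k hk; rw [hz]; simp only [Function.update_of_ne hk]; ring
  have hzJ : x J ≤ z J := by
    rw [hz]; simp only [Function.update_self]; nlinarith
  have hsum : ∑ k ∈ Finset.univ.erase J, Af a b z k = ∑ k ∈ Finset.univ.erase J, Af a b x k := by
    refine Finset.sum_congr rfl fun k hk => ?_
    have : z k = x k := hzk k (Finset.mem_erase.mp hk).1
    show a k * Real.exp (z k) + b k * Real.exp (-z k) = _
    rw [this]; rfl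
  have hx' : c + b J * Real.exp (-x J) + ∑ k ∈ Finset.univ.erase J, Af a b x k
      < a J * Real.exp (x J) := hx
  show c + b J * Real.exp (-z J) + ∑ k ∈ Finset.univ.erase J, Af a b z k < a J * Real.exp (z J)
  rw [hsum]
  have k1 : Real.exp (-z J) ≤ Real.exp (-x J) := Real.exp_le_exp.mpr (by linarith)
  have k2 : Real.exp (x J) ≤ Real.exp (z J) := Real.exp_le_exp.mpr hzJ
  have := hb J; have := ha J
  nlinarith

/-- `Up` is path connected. -/
lemma Up_isPathConnected (ha : ∀ j, 0 < a j) (hb : ∀ j, 0 < b j) (hc : 0 < c) (J : Fin n) :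
    IsPathConnected (Up a b c J) := by
  obtain ⟨s₀, -, hu₀⟩ := flow_reach_plus ha hb hc (fun _ => 0) J
  refine ⟨_, hu₀, ?_⟩
  intro y hy
  set x : Fin n → ℝ := Function.update (fun _ => (0:ℝ)) J s₀ with hxdef
  -- choose a common high level T
  set M : Fin n → ℝ := fun k =>
    max (a k * Real.exp (x k)) (a k * Real.exp (y k)) +
    max (b k * Real.exp (-x k)) (b k * Real.exp (-y k)) with hM
  have hM0 : ∀ k, 0 < M k := by
    intro k
    have h1 : 0 < a k * Real.exp (x k) := mul_pos (ha k) (Real.exp_pos _)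
    have h2 : 0 < b k * Real.exp (-x k) := mul_pos (hb k) (Real.exp_pos _)
    have := le_max_left (a k * Real.exp (x k)) (a k * Real.exp (y k))
    have := le_max_left (b k * Real.exp (-x k)) (b k * Real.exp (-y k))
    rw [hM]; dsimp only; linarith
  set Q : ℝ := c + b J + ∑ k ∈ Finset.univ.erase J, M k with hQ
  have hQpos : 0 < Q := by
    have : (0:ℝ) ≤ ∑ k ∈ Finset.univ.erase J, M k :=
      Finset.sum_nonneg fun k _ => (hM0 k).le
    have := hb J; rw [hQ]; linarith
  set T : ℝ := max (max (x J) (y J)) (max 0 (Real.log (Q / a J) + 1)) with hTdef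
  have hTx : x J ≤ T := le_trans (le_max_left _ _) (le_max_left _ _)
  have hTy : y J ≤ T := le_trans (le_max_right _ _) (le_max_left _ _)
  have hT0 : (0:ℝ) ≤ T := le_trans (le_max_left 0 _) (le_max_right _ _)
  have hTl : Real.log (Q / a J) + 1 ≤ T := le_trans (le_max_right 0 _) (le_max_right _ _)
  have hQT : Q < a J * Real.exp T := by
    have hl : Real.exp (Real.log (Q / a J) + 1) ≤ Real.exp T := Real.exp_le_exp.mpr hTl
    rw [Real.exp_add, Real.exp_log (div_pos hQpos (ha J))] at hl
    have he : (1:ℝ) < Real.exp 1 := by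
      have := Real.add_one_le_exp 1; linarith
    have hqa : (0:ℝ) < Q / a J := div_pos hQpos (ha J)
    have h4 : Q / a J < Real.exp T := by nlinarith
    have h5 : a J * (Q / a J) < a J * Real.exp T := mul_lt_mul_of_pos_left h4 (ha J)
    rwa [mul_div_cancel₀ Q (ne_of_gt (ha J))] at h5
  -- the three segments
  have seg1 : JoinedIn (Up a b c J) x (Function.update x J T) :=
    joinedIn_segment fun t ht0 ht1 => Up_seg_vert ha hb hu₀ hTx ht0 ht1
  have seg3 : JoinedIn (Up a b c J) y (Function.update y J T) :=
    joinedIn_segment fun t ht0 ht1 => Up_seg_vert ha hb hy hTy ht0 ht1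
  have seg2 : JoinedIn (Up a b c J) (Function.update x J T) (Function.update y J T) := by
    apply joinedIn_segment
    intro t ht0 ht1
    set z : Fin n → ℝ :=
      fun k => (1 - t) * Function.update x J T k + t * Function.update y J T k with hzdef
    have hzJ : z J = T := by
      rw [hzdef]; simp only [Function.update_self]; ring
    have hbound : ∑ k ∈ Finset.univ.erase J, Af a b z k ≤ ∑ k ∈ Finset.univ.erase J, M k := by
      refine Finset.sum_le_sum fun k hk => ?_
      have hkJ : k ≠ J := (Finset.mem_erase.mp hk).1
      have := Af_seg_le ha hb (Function.update x J T) (Function.update y J T) ht0 ht1 k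
      rw [hM]; dsimp only
      simp only [Function.update_of_ne hkJ] at this ⊢
      exact this
    show c + b J * Real.exp (-z J) + ∑ k ∈ Finset.univ.erase J, Af a b z k
        < a J * Real.exp (z J)
    rw [hzJ]
    have h1 : b J * Real.exp (-T) ≤ b J := by
      have : Real.exp (-T) ≤ 1 := by
        rw [← Real.exp_zero]; exact Real.exp_le_exp.mpr (by linarith)
      nlinarith [hb J]
    rw [hQ] at hQT
    linarith
  exact (seg1.trans seg2).trans seg3.symm

lemma Up_nonempty (ha : ∀ j, 0 < a j) (hb : ∀ j, 0 < b j) (hc : 0 < c) (J : Fin n) :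
    (Up a b c J).Nonempty := by
  obtain ⟨s₀, -, hu₀⟩ := flow_reach_plus ha hb hc (fun _ => 0) J
  exact ⟨_, hu₀⟩

lemma continuous_updateJ (y : Fin n → ℝ) (J : Fin n) :
    Continuous fun s : ℝ => Function.update y J s := by
  apply continuous_pi; intro k
  by_cases hk : k = J
  · subst hk; simp only [Function.update_self]; exact continuous_id
  · simp only [Function.update_of_ne hk]; exact continuous_const

/-- `Sp` is connected. -/
lemma Sp_isConnected (ha : ∀ j, 0 < a j) (hb : ∀ j, 0 < b j) (hc : 0 < c) (J : Fin n) :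
    IsConnected (Sp a b c J) := by
  obtain ⟨s₀, -, hu₀⟩ := flow_reach_plus ha hb hc (fun _ => 0) J
  set u₀ : Fin n → ℝ := Function.update (fun _ => (0:ℝ)) J s₀ with hu₀def
  have hu₀Sp : u₀ ∈ Sp a b c J := Up_subset_Sp ha hb hc J hu₀
  refine ⟨⟨u₀, hu₀Sp⟩, ?_⟩
  apply isPreconnected_of_forall u₀
  intro y hy
  obtain ⟨sy, hsy, hyU⟩ := flow_reach_plus ha hb hc y J
  refine ⟨(fun s => Function.update y J s) '' Ici (y J) ∪ Up a b c J, ?_, ?_, ?_, ?_⟩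
  · rintro z (⟨s, hs, rfl⟩ | hz)
    · exact flow_plus ha hb hc hy hs
    · exact Up_subset_Sp ha hb hc J hz
  · right; exact hu₀
  · left; exact ⟨y J, self_mem_Ici, Function.update_eq_self J y⟩
  · apply IsPreconnected.union (Function.update y J sy)
    · exact ⟨sy, hsy, rfl⟩
    · exact hyU
    · exact isPreconnected_Ici.image _ (continuous_updateJ y J).continuousOn
    · exact (Up_isPathConnected ha hb hc J).isConnected.isPreconnected

/-- `U0` is convex. -/
lemma U0_convex (ha : ∀ j, 0 < a j) (hb : ∀ j, 0 < b j) : Convex ℝ (U0 a b c) := by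
  intro x hx y hy s t hs ht hst
  have hx' : ∑ j, Af a b x j < c := hx
  have hy' : ∑ j, Af a b y j < c := hy
  have key : ∀ j, Af a b (s • x + t • y) j ≤ s * Af a b x j + t * Af a b y j := by
    intro j
    have h1 : Real.exp (s * x j + t * y j) ≤ s * Real.exp (x j) + t * Real.exp (y j) := by
      have := convexOn_exp.2 (Set.mem_univ (x j)) (Set.mem_univ (y j)) hs ht hst
      simpa using this
    have h2 : Real.exp (-(s * x j + t * y j)) ≤ s * Real.exp (-x j) + t * Real.exp (-y j) := by
      have := convexOn_exp.2 (Set.mem_univ (-x j)) (Set.mem_univ (-y j)) hs ht hst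
      simp only [smul_eq_mul] at this
      have he : s * -x j + t * -y j = -(s * x j + t * y j) := by ring
      rw [he] at this; exact this
    have hAf : Af a b (s • x + t • y) j =
        a j * Real.exp (s * x j + t * y j) + b j * Real.exp (-(s * x j + t * y j)) := rfl
    have hAx : Af a b x j = a j * Real.exp (x j) + b j * Real.exp (-x j) := rfl
    have hAy : Af a b y j = a j * Real.exp (y j) + b j * Real.exp (-y j) := rfl
    rw [hAf, hAx, hAy]
    nlinarith [mul_le_mul_of_nonneg_left h1 (ha j).le, mul_le_mul_of_nonneg_left h2 (hb j).le]
  have hsum : ∑ j, Af a b (s • x + t • y) j ≤ s * ∑ j, Af a b x j + t * ∑ j, Af a b y j := by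
    rw [Finset.mul_sum, Finset.mul_sum, ← Finset.sum_add_distrib]
    exact Finset.sum_le_sum fun j _ => key j
  show ∑ j, Af a b (s • x + t • y) j < c
  rcases eq_or_lt_of_le hs with rfl | hs'
  · simp only [zero_add] at hst
    rw [hst] at hsum ⊢
    simp only [zero_mul, one_mul, zero_add] at hsum
    linarith
  · have hcc : s * c + t * c = c := by rw [← add_mul, hst, one_mul]
    have g1 : s * ∑ j, Af a b x j < s * c := mul_lt_mul_of_pos_left hx' hs'
    have g2 : t * ∑ j, Af a b y j ≤ t * c := mul_le_mul_of_nonneg_left hy'.le ht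
    linarith

end Connect

section Reflect

variable {n : ℕ} {a b : Fin n → ℝ} {c : ℝ}

/-- Reflection of the `J`-th coordinate. -/
def reflJ (J : Fin n) : (Fin n → ℝ) → (Fin n → ℝ) :=
  fun ξ => Function.update ξ J (-ξ J)

lemma reflJ_apply_self (J : Fin n) (ξ : Fin n → ℝ) : reflJ J ξ J = -ξ J :=
  Function.update_self _ _ _

lemma reflJ_apply_ne {J k : Fin n} (hk : k ≠ J) (ξ : Fin n → ℝ) : reflJ J ξ k = ξ k :=
  Function.update_of_ne hk _ _

lemma reflJ_invol (J : Fin n) (ξ : Fin n → ℝ) : reflJ J (reflJ J ξ) = ξ := by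
  funext k
  by_cases hk : k = J
  · subst hk
    rw [reflJ_apply_self, reflJ_apply_self, neg_neg]
  · rw [reflJ_apply_ne hk, reflJ_apply_ne hk]

lemma continuous_reflJ (J : Fin n) : Continuous (reflJ J) := by
  apply continuous_pi; intro k
  by_cases hk : k = J
  · subst hk
    simp only [reflJ, Function.update_self]
    exact (continuous_apply k).neg
  · simp only [reflJ, Function.update_of_ne hk]
    exact continuous_apply k

lemma Af_reflJ (J : Fin n) (ξ : Fin n → ℝ) :
    Af (Function.update a J (b J)) (Function.update b J (a J)) (reflJ J ξ) = Af a b ξ := by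
  funext k
  by_cases hk : k = J
  · subst hk
    show Function.update a k (b k) k * Real.exp (reflJ k ξ k) +
      Function.update b k (a k) k * Real.exp (-reflJ k ξ k) = _
    rw [Function.update_self, Function.update_self, reflJ_apply_self, neg_neg]
    show b k * Real.exp (-ξ k) + a k * Real.exp (ξ k) = a k * Real.exp (ξ k) + b k * Real.exp (-ξ k)
    ring
  · show Function.update a J (b J) k * Real.exp (reflJ J ξ k) +
      Function.update b J (a J) k * Real.exp (-reflJ J ξ k) = _
    rw [Function.update_of_ne hk, Function.update_of_ne hk, reflJ_apply_ne hk]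
    rfl

lemma Cf_reflJ_self (J : Fin n) (ξ : Fin n → ℝ) :
    Cf (Function.update a J (b J)) (Function.update b J (a J)) (reflJ J ξ) J = -Cf a b ξ J := by
  show Function.update a J (b J) J * Real.exp (reflJ J ξ J) -
    Function.update b J (a J) J * Real.exp (-reflJ J ξ J) = _
  rw [Function.update_self, Function.update_self, reflJ_apply_self, neg_neg]
  show b J * Real.exp (-ξ J) - a J * Real.exp (ξ J) = -(a J * Real.exp (ξ J) - b J * Real.exp (-ξ J))
  ring

lemma Cf_reflJ_ne {J k : Fin n} (hk : k ≠ J) (ξ : Fin n → ℝ) :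
    Cf (Function.update a J (b J)) (Function.update b J (a J)) (reflJ J ξ) k = Cf a b ξ k := by
  show Function.update a J (b J) k * Real.exp (reflJ J ξ k) -
    Function.update b J (a J) k * Real.exp (-reflJ J ξ k) = _
  rw [Function.update_of_ne hk, Function.update_of_ne hk, reflJ_apply_ne hk]
  rfl

lemma hits_reflJ (J : Fin n) (ξ : Fin n → ℝ) :
    hits (Af (Function.update a J (b J)) (Function.update b J (a J)) (reflJ J ξ))
      (Cf (Function.update a J (b J)) (Function.update b J (a J)) (reflJ J ξ)) c ↔
    hits (Af a b ξ) (Cf a b ξ) c := by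
  constructor
  · intro h
    rw [Af_reflJ] at h
    refine hits_of_hits_sign (fun j => ?_) h
    by_cases hj : j = J
    · subst hj; right; rw [Cf_reflJ_self, neg_neg]
    · left; exact (Cf_reflJ_ne hj ξ).symm
  · intro h
    rw [Af_reflJ]
    refine hits_of_hits_sign (fun j => ?_) h
    by_cases hj : j = J
    · subst hj; right; rw [Cf_reflJ_self]
    · left; exact Cf_reflJ_ne hj ξ

lemma mem_Sm_iff {J : Fin n} {ξ : Fin n → ℝ} :
    ξ ∈ Sm a b c J ↔
      reflJ J ξ ∈ Sp (Function.update a J (b J)) (Function.update b J (a J)) c J := by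
  have h1 : (reflJ J ξ ∈ Sset (Function.update a J (b J)) (Function.update b J (a J)) c)
      ↔ ξ ∈ Sset a b c := not_congr (hits_reflJ J ξ)
  have h2 : (reflJ J ξ ∈ Vs (Function.update a J (b J)) (Function.update b J (a J)) c J)
      ↔ ξ ∈ Vs a b c J := by
    show (c + ∑ k ∈ Finset.univ.erase J,
        Af (Function.update a J (b J)) (Function.update b J (a J)) (reflJ J ξ) k <
        Af (Function.update a J (b J)) (Function.update b J (a J)) (reflJ J ξ) J) ↔ _
    rw [Af_reflJ]
    rfl
  have h3 : (0 < Cf (Function.update a J (b J)) (Function.update b J (a J)) (reflJ J ξ) J)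
      ↔ Cf a b ξ J < 0 := by rw [Cf_reflJ_self]; exact neg_pos
  constructor
  · rintro ⟨⟨hS, hV⟩, hC⟩
    exact ⟨⟨h1.mpr hS, h2.mpr hV⟩, h3.mpr hC⟩
  · rintro ⟨⟨hS, hV⟩, hC⟩
    exact ⟨⟨h1.mp hS, h2.mp hV⟩, h3.mp hC⟩

lemma Sm_eq_image (J : Fin n) :
    Sm a b c J = reflJ J '' (Sp (Function.update a J (b J)) (Function.update b J (a J)) c J) := by
  ext ξ
  constructor
  · intro h
    exact ⟨reflJ J ξ, mem_Sm_iff.mp h, reflJ_invol J ξ⟩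
  · rintro ⟨η, hη, rfl⟩
    apply mem_Sm_iff.mpr
    rw [reflJ_invol]
    exact hη

lemma update_pos {f : Fin n → ℝ} (hf : ∀ j, 0 < f j) {J : Fin n} {v : ℝ} (hv : 0 < v) :
    ∀ j, 0 < Function.update f J v j := by
  intro j
  by_cases hj : j = J
  · subst hj; rw [Function.update_self]; exact hv
  · rw [Function.update_of_ne hj]; exact hf j

lemma Sm_isConnected (ha : ∀ j, 0 < a j) (hb : ∀ j, 0 < b j) (hc : 0 < c) (J : Fin n) :
    IsConnected (Sm a b c J) := by
  rw [Sm_eq_image]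
  exact (Sp_isConnected (update_pos ha (hb J)) (update_pos hb (ha J)) hc J).image _
    (continuous_reflJ J).continuousOn

end Reflect

section U0facts

variable {n : ℕ} {a b : Fin n → ℝ} {c : ℝ}

lemma two_sqrt_le {x y : ℝ} (hx : 0 ≤ x) (hy : 0 ≤ y) : 2 * Real.sqrt (x * y) ≤ x + y := by
  have h1 : Real.sqrt (x * y) ≤ Real.sqrt (((x + y) / 2) ^ 2) :=
    Real.sqrt_le_sqrt (by nlinarith [sq_nonneg (x - y)])
  rw [Real.sqrt_sq (by linarith : (0:ℝ) ≤ (x + y) / 2)] at h1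
  linarith

lemma exp_mul_exp_neg (u : ℝ) : Real.exp u * Real.exp (-u) = 1 := by
  rw [← Real.exp_add]; simp

lemma sqrt_le_Af (ha : ∀ j, 0 < a j) (hb : ∀ j, 0 < b j) (ξ : Fin n → ℝ) (j : Fin n) :
    2 * Real.sqrt (a j * b j) ≤ Af a b ξ j := by
  have hee := exp_mul_exp_neg (ξ j)
  have hxy : (a j * Real.exp (ξ j)) * (b j * Real.exp (-ξ j)) = a j * b j := by
    linear_combination (a j * b j) * hee
  have h := two_sqrt_le (x := a j * Real.exp (ξ j)) (y := b j * Real.exp (-ξ j))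
    (mul_pos (ha j) (Real.exp_pos _)).le (mul_pos (hb j) (Real.exp_pos _)).le
  rw [hxy] at h
  have hAf : Af a b ξ j = a j * Real.exp (ξ j) + b j * Real.exp (-ξ j) := rfl
  rw [hAf]
  exact h

lemma U0_empty (ha : ∀ j, 0 < a j) (hb : ∀ j, 0 < b j)
    (h : ¬ (∑ j, Real.sqrt (a j * b j) < c / 2)) : U0 a b c = ∅ := by
  rw [Set.eq_empty_iff_forall_notMem]
  intro ξ hξ
  have hξ' : ∑ j, Af a b ξ j < c := hξ
  have h1 : ∑ j, 2 * Real.sqrt (a j * b j) ≤ ∑ j, Af a b ξ j :=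
    Finset.sum_le_sum fun j _ => sqrt_le_Af ha hb ξ j
  have h2 : ∑ j, 2 * Real.sqrt (a j * b j) = 2 * ∑ j, Real.sqrt (a j * b j) :=
    (Finset.mul_sum _ _ _).symm
  push_neg at h
  linarith

lemma mul_sqrt_div {x y : ℝ} (hx : 0 < x) (hy : 0 < y) :
    x * Real.sqrt (y / x) = Real.sqrt (x * y) := by
  nth_rewrite 1 [← Real.sqrt_sq hx.le]
  rw [← Real.sqrt_mul (sq_nonneg x)]
  congr 1
  field_simp

lemma U0_nonempty (ha : ∀ j, 0 < a j) (hb : ∀ j, 0 < b j)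
    (h : ∑ j, Real.sqrt (a j * b j) < c / 2) : (U0 a b c).Nonempty := by
  refine ⟨fun j => Real.log (Real.sqrt (b j / a j)), ?_⟩
  show ∑ j, Af a b (fun j => Real.log (Real.sqrt (b j / a j))) j < c
  have hAf : ∀ j, Af a b (fun j => Real.log (Real.sqrt (b j / a j))) j
      = 2 * Real.sqrt (a j * b j) := by
    intro j
    have hsq : 0 < Real.sqrt (b j / a j) := Real.sqrt_pos.mpr (div_pos (hb j) (ha j))
    have he : Real.exp (Real.log (Real.sqrt (b j / a j))) = Real.sqrt (b j / a j) :=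
      Real.exp_log hsq
    have hen : Real.exp (-(Real.log (Real.sqrt (b j / a j)))) = Real.sqrt (a j / b j) := by
      rw [Real.exp_neg, he, ← Real.sqrt_inv, inv_div]
    show a j * Real.exp (Real.log (Real.sqrt (b j / a j))) +
        b j * Real.exp (-(Real.log (Real.sqrt (b j / a j)))) = _
    rw [he, hen, mul_sqrt_div (ha j) (hb j), mul_sqrt_div (hb j) (ha j), mul_comm (b j) (a j)]
    ring
  calc ∑ j, Af a b (fun j => Real.log (Real.sqrt (b j / a j))) j
      = ∑ j, 2 * Real.sqrt (a j * b j) := Finset.sum_congr rfl fun j _ => hAf j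
  _ = 2 * ∑ j, Real.sqrt (a j * b j) := (Finset.mul_sum _ _ _).symm
  _ < c := by linarith

end U0facts

/-- Counting connected components from an open partition into connected pieces. -/
lemma card_components {Y : Type*} [TopologicalSpace Y] {ι : Type*} [Finite ι]
    (O : ι → Set Y) (ho : ∀ i, IsOpen (O i)) (hconn : ∀ i, IsConnected (O i))
    (hdisj : ∀ i j, i ≠ j → Disjoint (O i) (O j)) (hcov : ∀ y, ∃ i, y ∈ O i) :
    Nat.card (ConnectedComponents Y) = Nat.card ι := by
  classical
  have hclopen : ∀ i, IsClopen (O i) := by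
    intro i
    refine ⟨?_, ho i⟩
    have hcompl : (O i)ᶜ = ⋃ j, ⋃ _ : j ≠ i, O j := by
      ext y
      simp only [Set.mem_compl_iff, Set.mem_iUnion]
      constructor
      · intro hy
        obtain ⟨j, hj⟩ := hcov y
        exact ⟨j, fun h => hy (h ▸ hj), hj⟩
      · rintro ⟨j, hji, hj⟩ hyi
        exact Set.disjoint_left.mp (hdisj j i hji) hj hyi
    rw [← isOpen_compl_iff, hcompl]
    exact isOpen_iUnion fun j => isOpen_iUnion fun _ => ho j
  have hcomp : ∀ i, ∀ y ∈ O i, connectedComponent y = O i := fun i y hy =>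
    Set.Subset.antisymm ((hclopen i).connectedComponent_subset hy)
      ((hconn i).isPreconnected.subset_connectedComponent hy)
  choose pt hpt using fun i => (hconn i).nonempty
  have hbij : Function.Bijective (fun i => (ConnectedComponents.mk (pt i))) := by
    constructor
    · intro i j hij
      rw [ConnectedComponents.coe_eq_coe] at hij
      have hOij : O i = O j := by
        rw [← hcomp i (pt i) (hpt i), ← hcomp j (pt j) (hpt j), hij]
      by_contra hne
      exact Set.disjoint_left.mp (hdisj i j hne) (hpt i) (by rw [← hOij]; exact hpt i)
    · intro z
      obtain ⟨y, rfl⟩ := ConnectedComponents.surjective_coe z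
      obtain ⟨i, hi⟩ := hcov y
      refine ⟨i, ?_⟩
      rw [ConnectedComponents.coe_eq_coe, hcomp i (pt i) (hpt i), hcomp i y hi]
  exact (Nat.card_eq_of_bijective _ hbij).symm

section Amoeba

variable {n : ℕ} {a b : Fin n → ℝ} {c : ℝ}

lemma inv_canonical (E p q : ℝ) (hE : 0 < E) (hcirc : p ^ 2 + q ^ 2 = 1) :
    ((E : ℂ) * ((p : ℂ) + (q : ℂ) * Complex.I))⁻¹
      = ((E⁻¹ : ℝ) : ℂ) * ((p : ℂ) - (q : ℂ) * Complex.I) := by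
  have hc : ((p : ℂ)) ^ 2 + ((q : ℂ)) ^ 2 = 1 := by
    exact_mod_cast congrArg (fun r : ℝ => (r : ℂ)) hcirc
  have hpq : ((p : ℂ) + (q : ℂ) * Complex.I) * ((p : ℂ) - (q : ℂ) * Complex.I) = 1 := by
    linear_combination hc - (q : ℂ) ^ 2 * Complex.I_sq
  have hEe : (E : ℂ) * ((E⁻¹ : ℝ) : ℂ) = 1 := by
    rw [← Complex.ofReal_mul, mul_inv_cancel₀ (ne_of_gt hE), Complex.ofReal_one]
  have hmul : (E : ℂ) * ((p : ℂ) + (q : ℂ) * Complex.I) *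
      (((E⁻¹ : ℝ) : ℂ) * ((p : ℂ) - (q : ℂ) * Complex.I)) = 1 := by
    calc (E : ℂ) * ((p : ℂ) + (q : ℂ) * Complex.I) *
        (((E⁻¹ : ℝ) : ℂ) * ((p : ℂ) - (q : ℂ) * Complex.I))
        = ((E : ℂ) * ((E⁻¹ : ℝ) : ℂ)) *
          (((p : ℂ) + (q : ℂ) * Complex.I) * ((p : ℂ) - (q : ℂ) * Complex.I)) := by ring
    _ = 1 := by rw [hEe, hpq, mul_one]
  exact inv_eq_of_mul_eq_one_right hmul

lemma canonical_eval (ξ p q : Fin n → ℝ) (hcirc : ∀ j, p j ^ 2 + q j ^ 2 = 1) :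
    (c : ℂ) + ∑ j, ((a j : ℂ) * ((Real.exp (ξ j) : ℂ) * ((p j : ℂ) + (q j : ℂ) * Complex.I)) +
        (b j : ℂ) * ((Real.exp (ξ j) : ℂ) * ((p j : ℂ) + (q j : ℂ) * Complex.I))⁻¹)
      = ((c + ∑ j, Af a b ξ j * p j : ℝ) : ℂ) +
        ((∑ j, Cf a b ξ j * q j : ℝ) : ℂ) * Complex.I := by
  have hterm : ∀ j : Fin n,
      (a j : ℂ) * ((Real.exp (ξ j) : ℂ) * ((p j : ℂ) + (q j : ℂ) * Complex.I)) +
        (b j : ℂ) * ((Real.exp (ξ j) : ℂ) * ((p j : ℂ) + (q j : ℂ) * Complex.I))⁻¹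
      = ((Af a b ξ j * p j : ℝ) : ℂ) + ((Cf a b ξ j * q j : ℝ) : ℂ) * Complex.I := by
    intro j
    rw [inv_canonical _ _ _ (Real.exp_pos (ξ j)) (hcirc j)]
    have hA : Af a b ξ j = a j * Real.exp (ξ j) + b j * Real.exp (-ξ j) := rfl
    have hC : Cf a b ξ j = a j * Real.exp (ξ j) - b j * Real.exp (-ξ j) := rfl
    have hEinv : (Real.exp (ξ j))⁻¹ = Real.exp (-ξ j) := (Real.exp_neg (ξ j)).symm
    rw [hA, hC, hEinv]
    push_cast
    ring
  rw [Finset.sum_congr rfl (fun j _ => hterm j)]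
  rw [Finset.sum_add_distrib]
  push_cast
  rw [Finset.sum_mul]
  ring

/-- Membership in the amoeba in terms of `hits`. -/
lemma mem_amoeba_iff (ha : ∀ j, 0 < a j) (hb : ∀ j, 0 < b j) (ξ : Fin n → ℝ) :
    ξ ∈ amoeba (fun x : Fin n → ℂ =>
        (c : ℂ) + ∑ j, ((a j : ℂ) * x j + (b j : ℂ) * (x j)⁻¹)) ↔
      hits (Af a b ξ) (Cf a b ξ) c := by
  constructor
  · rintro ⟨x, hx0, hfx, hξ⟩
    have hE : ∀ j, ‖x j‖ = Real.exp (ξ j) := by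
      intro j
      rw [hξ j, Real.exp_log (norm_pos_iff.mpr (hx0 j))]
    set p : Fin n → ℝ := fun j => (x j).re / Real.exp (ξ j) with hp
    set q : Fin n → ℝ := fun j => (x j).im / Real.exp (ξ j) with hq
    have hcirc : ∀ j, p j ^ 2 + q j ^ 2 = 1 := by
      intro j
      have h1 : (x j).re * (x j).re + (x j).im * (x j).im = Real.exp (ξ j) ^ 2 := by
        rw [← Complex.normSq_apply, Complex.normSq_eq_norm_sq, hE j]
      have h2 : Real.exp (ξ j) ≠ 0 := ne_of_gt (Real.exp_pos _)
      show ((x j).re / Real.exp (ξ j)) ^ 2 + ((x j).im / Real.exp (ξ j)) ^ 2 = 1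
      field_simp
      nlinarith [h1]
    have hxj : ∀ j, x j = (Real.exp (ξ j) : ℂ) * ((p j : ℂ) + (q j : ℂ) * Complex.I) := by
      intro j
      have h2 : Real.exp (ξ j) ≠ 0 := ne_of_gt (Real.exp_pos _)
      apply Complex.ext
      · simp only [Complex.mul_re, Complex.add_re, Complex.add_im, Complex.ofReal_re,
          Complex.ofReal_im, Complex.mul_im, Complex.I_re, Complex.I_im]
        show (x j).re = Real.exp (ξ j) * ((x j).re / Real.exp (ξ j) + ((x j).im / Real.exp (ξ j) * 0 - 0 * 1)) - 0 * (0 + ((x j).im / Real.exp (ξ j) * 1 + 0 * 0))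
        field_simp
        ring
      · simp only [Complex.mul_re, Complex.add_re, Complex.add_im, Complex.ofReal_re,
          Complex.ofReal_im, Complex.mul_im, Complex.I_re, Complex.I_im]
        show (x j).im = Real.exp (ξ j) * (0 + ((x j).im / Real.exp (ξ j) * 1 + 0 * 0)) + 0 * ((x j).re / Real.exp (ξ j) + ((x j).im / Real.exp (ξ j) * 0 - 0 * 1))
        field_simp
        ring
    have hfx' : (c : ℂ) + ∑ j, ((a j : ℂ) * x j + (b j : ℂ) * (x j)⁻¹) = 0 := hfx
    rw [Finset.sum_congr rfl (fun j (_ : j ∈ Finset.univ) => by rw [hxj j] :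
        ∀ j ∈ Finset.univ, (a j : ℂ) * x j + (b j : ℂ) * (x j)⁻¹ =
        (a j : ℂ) * ((Real.exp (ξ j) : ℂ) * ((p j : ℂ) + (q j : ℂ) * Complex.I)) +
        (b j : ℂ) * ((Real.exp (ξ j) : ℂ) * ((p j : ℂ) + (q j : ℂ) * Complex.I))⁻¹),
      canonical_eval ξ p q hcirc] at hfx'
    rw [Complex.ext_iff] at hfx'
    obtain ⟨hre, him⟩ := hfx'
    simp only [Complex.add_re, Complex.ofReal_re, Complex.mul_re, Complex.I_re, Complex.I_im,
      Complex.ofReal_im, Complex.zero_re, Complex.add_im, Complex.mul_im, Complex.zero_im] at hre him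
    exact ⟨p, q, hcirc, by linarith, by linarith⟩
  · rintro ⟨p, q, hcirc, h1, h2⟩
    refine ⟨fun j => (Real.exp (ξ j) : ℂ) * ((p j : ℂ) + (q j : ℂ) * Complex.I),
      fun j => ?_, ?_, fun j => ?_⟩
    · apply mul_ne_zero
      · exact Complex.ofReal_ne_zero.mpr (ne_of_gt (Real.exp_pos _))
      · intro h0
        have := abs_unit (p j) (q j) (hcirc j)
        rw [h0, norm_zero] at this
        norm_num at this
    · show (c : ℂ) + ∑ j, ((a j : ℂ) * _ + (b j : ℂ) * _⁻¹) = 0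
      rw [canonical_eval ξ p q hcirc, h1, h2]
      push_cast
      ring
    · rw [norm_mul, Complex.norm_real, Real.norm_eq_abs, abs_of_pos (Real.exp_pos _),
        abs_unit (p j) (q j) (hcirc j), mul_one, Real.log_exp]

end Amoeba

section Assembly

variable {n : ℕ} {a b : Fin n → ℝ} {c : ℝ}

lemma preconn_transfer {X : Type*} [TopologicalSpace X] {S P : Set X} (hP : P ⊆ S)
    (h : IsConnected P) : IsConnected ((Subtype.val ⁻¹' P : Set ↥S)) := by
  have key : Subtype.val '' (Subtype.val ⁻¹' P : Set ↥S) = P := by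
    rw [Subtype.image_preimage_coe]
    exact Set.inter_eq_self_of_subset_right hP
  constructor
  · obtain ⟨x, hx⟩ := h.nonempty
    exact ⟨⟨x, hP hx⟩, hx⟩
  · exact (Topology.IsInducing.isPreconnected_image Topology.IsInducing.subtypeVal).mp
      (by rw [key]; exact h.isPreconnected)

lemma continuous_Af_j (j : Fin n) : Continuous fun ξ : Fin n → ℝ => Af a b ξ j := by
  show Continuous fun ξ : Fin n → ℝ => a j * Real.exp (ξ j) + b j * Real.exp (-ξ j)
  exact (continuous_const.mul (Real.continuous_exp.comp (continuous_apply j))).add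
    (continuous_const.mul (Real.continuous_exp.comp (continuous_apply j).neg))

lemma continuous_Cf_j (j : Fin n) : Continuous fun ξ : Fin n → ℝ => Cf a b ξ j := by
  show Continuous fun ξ : Fin n → ℝ => a j * Real.exp (ξ j) - b j * Real.exp (-ξ j)
  exact (continuous_const.mul (Real.continuous_exp.comp (continuous_apply j))).sub
    (continuous_const.mul (Real.continuous_exp.comp (continuous_apply j).neg))

lemma U0_open : IsOpen (U0 a b c) := by
  have : U0 a b c = {ξ : Fin n → ℝ | (∑ j, Af a b ξ j) < c} := rfl
  rw [this]
  exact isOpen_lt (continuous_finset_sum _ fun j _ => continuous_Af_j j) continuous_const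

lemma Vs_open (J : Fin n) : IsOpen (Vs a b c J) :=
  isOpen_lt (continuous_const.add (continuous_finset_sum _ fun k _ => continuous_Af_j k))
    (continuous_Af_j J)

lemma Cpos_open (J : Fin n) : IsOpen {ξ : Fin n → ℝ | 0 < Cf a b ξ J} :=
  isOpen_lt continuous_const (continuous_Cf_j J)

lemma Cneg_open (J : Fin n) : IsOpen {ξ : Fin n → ℝ | Cf a b ξ J < 0} :=
  isOpen_lt (continuous_Cf_j J) continuous_const

lemma Sp_eq_inter (J : Fin n) :
    (Vs a b c J ∩ {ξ | 0 < Cf a b ξ J}) ∩ Sset a b c = Sp a b c J := by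
  ext ξ
  constructor
  · rintro ⟨⟨h1, h2⟩, h3⟩; exact ⟨⟨h3, h1⟩, h2⟩
  · rintro ⟨⟨h3, h1⟩, h2⟩; exact ⟨⟨h1, h2⟩, h3⟩

lemma Sm_eq_inter (J : Fin n) :
    (Vs a b c J ∩ {ξ | Cf a b ξ J < 0}) ∩ Sset a b c = Sm a b c J := by
  ext ξ
  constructor
  · rintro ⟨⟨h1, h2⟩, h3⟩; exact ⟨⟨h3, h1⟩, h2⟩
  · rintro ⟨⟨h3, h1⟩, h2⟩; exact ⟨⟨h1, h2⟩, h3⟩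

lemma preimage_congr_inter {X : Type*} {S P : Set X} :
    (Subtype.val ⁻¹' P : Set ↥S) = Subtype.val ⁻¹' (P ∩ S) := by
  ext z
  simp only [Set.mem_preimage, Set.mem_inter_iff, iff_self_and]
  exact fun _ => z.2

lemma components_eq_of_cond (hn : 2 ≤ n) (ha : ∀ j, 0 < a j) (hb : ∀ j, 0 < b j) (hc : 0 < c)
    (hcond : ∑ j, Real.sqrt (a j * b j) < c / 2) :
    Nat.card (ConnectedComponents ↥(Sset a b c)) = 2 * n + 1 := by
  classical
  set W : Option (Fin n × Bool) → Set (Fin n → ℝ) := fun i =>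
    Option.rec (U0 a b c)
      (fun p => Vs a b c p.1 ∩ (if p.2 then {ξ | 0 < Cf a b ξ p.1} else {ξ | Cf a b ξ p.1 < 0})) i
    with hW
  have hWnone : W none = U0 a b c := rfl
  have hWtrue : ∀ J : Fin n, W (some (J, true)) = Vs a b c J ∩ {ξ | 0 < Cf a b ξ J} := fun J => rfl
  have hWfalse : ∀ J : Fin n, W (some (J, false)) = Vs a b c J ∩ {ξ | Cf a b ξ J < 0} :=
    fun J => rfl
  have hWopen : ∀ i, IsOpen (W i) := by
    rintro (_ | ⟨J, _ | _⟩)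
    · exact U0_open
    · rw [hWfalse]; exact (Vs_open J).inter (Cneg_open J)
    · rw [hWtrue]; exact (Vs_open J).inter (Cpos_open J)
  have hWmem : ∀ (ξ : Fin n → ℝ) i, ξ ∈ Sset a b c → ξ ∈ W i →
      (i = none → ξ ∈ U0 a b c) ∧ (∀ J σ, i = some (J, σ) → ξ ∈ Vs a b c J) := by
    rintro ξ (_ | ⟨J, σ⟩) hS hi
    · exact ⟨fun _ => hi, fun J σ h => by simp at h⟩
    · refine ⟨fun h => by simp at h, fun K τ h => ?_⟩
      have : J = K := by injection h with h'; exact (congrArg Prod.fst h' : _)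
      subst this
      exact hi.1
  have hdisj : ∀ i j, i ≠ j → Disjoint ((Subtype.val ⁻¹' W i : Set ↥(Sset a b c)))
      (Subtype.val ⁻¹' W j) := by
    intro i j hij
    rw [Set.disjoint_left]
    rintro z hzi hzj
    have hS := z.2
    match i, j with
    | none, none => exact hij rfl
    | none, some (K, τ) => exact U0_disj_V hc ha hb hzi hzj.1
    | some (J, σ), none => exact U0_disj_V hc ha hb hzj hzi.1
    | some (J, σ), some (K, τ) =>
      by_cases hJK : J = K
      · subst hJK
        have hστ : σ ≠ τ := fun h => hij (by rw [h])
        match σ, τ with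
        | true, true => exact hστ rfl
        | false, false => exact hστ rfl
        | true, false =>
          have h1 : 0 < Cf a b (z:Fin n → ℝ) J := hzi.2
          have h2 : Cf a b (z:Fin n → ℝ) J < 0 := hzj.2
          linarith
        | false, true =>
          have h1 : 0 < Cf a b (z:Fin n → ℝ) J := hzj.2
          have h2 : Cf a b (z:Fin n → ℝ) J < 0 := hzi.2
          linarith
      · exact V_disj hc ha hb hJK hzi.1 hzj.1
  have hcov : ∀ z : ↥(Sset a b c), ∃ i, z ∈ (Subtype.val ⁻¹' W i : Set ↥(Sset a b c)) := by
    intro z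
    rcases S_cover hn ha hb z.2 with h0 | ⟨J, hV⟩
    · exact ⟨none, h0⟩
    · rcases lt_trichotomy (Cf a b (z : Fin n → ℝ) J) 0 with hneg | hzero | hpos
      · exact ⟨some (J, false), hV, hneg⟩
      · exact absurd hzero (S_V_Cne hc ha hb z.2 hV)
      · exact ⟨some (J, true), hV, hpos⟩
  have hconn : ∀ i, IsConnected ((Subtype.val ⁻¹' W i : Set ↥(Sset a b c))) := by
    rintro (_ | ⟨J, _ | _⟩)
    · rw [hWnone]
      exact preconn_transfer (U0_subset_S ha hb)
        ⟨U0_nonempty ha hb hcond, (U0_convex ha hb).isPreconnected⟩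
    · rw [hWfalse, preimage_congr_inter, Sm_eq_inter]
      exact preconn_transfer (fun ξ hξ => hξ.1.1) (Sm_isConnected ha hb hc J)
    · rw [hWtrue, preimage_congr_inter, Sp_eq_inter]
      exact preconn_transfer (fun ξ hξ => hξ.1.1) (Sp_isConnected ha hb hc J)
  have := card_components (fun i => (Subtype.val ⁻¹' W i : Set ↥(Sset a b c)))
    (fun i => (hWopen i).preimage continuous_subtype_val) hconn hdisj hcov
  rw [this, Nat.card_eq_fintype_card]
  simp [Fintype.card_option, Fintype.card_prod]
  ring

lemma components_eq_of_not_cond (hn : 2 ≤ n) (ha : ∀ j, 0 < a j) (hb : ∀ j, 0 < b j) (hc : 0 < c)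
    (hcond : ¬ (∑ j, Real.sqrt (a j * b j) < c / 2)) :
    Nat.card (ConnectedComponents ↥(Sset a b c)) = 2 * n := by
  classical
  set W : (Fin n × Bool) → Set (Fin n → ℝ) := fun p =>
    Vs a b c p.1 ∩ (if p.2 then {ξ | 0 < Cf a b ξ p.1} else {ξ | Cf a b ξ p.1 < 0}) with hW
  have hWtrue : ∀ J : Fin n, W (J, true) = Vs a b c J ∩ {ξ | 0 < Cf a b ξ J} := fun J => rfl
  have hWfalse : ∀ J : Fin n, W (J, false) = Vs a b c J ∩ {ξ | Cf a b ξ J < 0} := fun J => rfl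
  have hWopen : ∀ i, IsOpen (W i) := by
    rintro ⟨J, _ | _⟩
    · rw [hWfalse]; exact (Vs_open J).inter (Cneg_open J)
    · rw [hWtrue]; exact (Vs_open J).inter (Cpos_open J)
  have hdisj : ∀ i j, i ≠ j → Disjoint ((Subtype.val ⁻¹' W i : Set ↥(Sset a b c)))
      (Subtype.val ⁻¹' W j) := by
    rintro ⟨J, σ⟩ ⟨K, τ⟩ hij
    rw [Set.disjoint_left]
    rintro z hzi hzj
    by_cases hJK : J = K
    · subst hJK
      have hστ : σ ≠ τ := fun h => hij (by rw [h])
      match σ, τ with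
      | true, true => exact hστ rfl
      | false, false => exact hστ rfl
      | true, false =>
        have h1 : 0 < Cf a b (z:Fin n → ℝ) J := hzi.2
        have h2 : Cf a b (z:Fin n → ℝ) J < 0 := hzj.2
        linarith
      | false, true =>
        have h1 : 0 < Cf a b (z:Fin n → ℝ) J := hzj.2
        have h2 : Cf a b (z:Fin n → ℝ) J < 0 := hzi.2
        linarith
    · exact V_disj hc ha hb hJK hzi.1 hzj.1
  have hcov : ∀ z : ↥(Sset a b c), ∃ i, z ∈ (Subtype.val ⁻¹' W i : Set ↥(Sset a b c)) := by
    intro z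
    rcases S_cover hn ha hb z.2 with h0 | ⟨J, hV⟩
    · rw [U0_empty ha hb hcond] at h0
      exact absurd h0 (Set.notMem_empty _)
    · rcases lt_trichotomy (Cf a b (z : Fin n → ℝ) J) 0 with hneg | hzero | hpos
      · exact ⟨(J, false), hV, hneg⟩
      · exact absurd hzero (S_V_Cne hc ha hb z.2 hV)
      · exact ⟨(J, true), hV, hpos⟩
  have hconn : ∀ i, IsConnected ((Subtype.val ⁻¹' W i : Set ↥(Sset a b c))) := by
    rintro ⟨J, _ | _⟩
    · rw [hWfalse, preimage_congr_inter, Sm_eq_inter]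
      exact preconn_transfer (fun ξ hξ => hξ.1.1) (Sm_isConnected ha hb hc J)
    · rw [hWtrue, preimage_congr_inter, Sp_eq_inter]
      exact preconn_transfer (fun ξ hξ => hξ.1.1) (Sp_isConnected ha hb hc J)
  have := card_components (fun i => (Subtype.val ⁻¹' W i : Set ↥(Sset a b c)))
    (fun i => (hWopen i).preimage continuous_subtype_val) hconn hdisj hcov
  rw [this, Nat.card_eq_fintype_card]
  simp [Fintype.card_prod]
  ring

end Assembly

end CrossAmoeba


/-- The Laurent polynomial `c + Σⱼ (aⱼ xⱼ + bⱼ/xⱼ)` with positive real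
coefficients, supported in the `n`-dimensional cross-polytope (which has `2n+1`
lattice points), is optimal — its amoeba complement has exactly `2n+1`
connected components — if and only if `Σⱼ √(aⱼbⱼ) < c/2`. -/
theorem cross_polytope_optimal_iff {n : ℕ} (hn : 2 ≤ n)
    (a b : Fin n → ℝ) (c : ℝ)
    (hapos : ∀ j, 0 < a j) (hbpos : ∀ j, 0 < b j) (hc : 0 < c) :
    Nat.card
        (ConnectedComponents
          ↥(amoeba fun x : Fin n → ℂ =>
              (c : ℂ) + ∑ j, ((a j : ℂ) * x j + (b j : ℂ) * (x j)⁻¹))ᶜ) =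
        2 * n + 1 ↔
      ∑ j, Real.sqrt (a j * b j) < c / 2 := by
  classical
  have hamoeba : (amoeba fun x : Fin n → ℂ =>
      (c : ℂ) + ∑ j, ((a j : ℂ) * x j + (b j : ℂ) * (x j)⁻¹))ᶜ
      = CrossAmoeba.Sset a b c := by
    ext ξ
    simp only [Set.mem_compl_iff, CrossAmoeba.Sset, Set.mem_setOf_eq]
    exact not_congr (CrossAmoeba.mem_amoeba_iff hapos hbpos ξ)
  rw [hamoeba]
  by_cases hcond : ∑ j, Real.sqrt (a j * b j) < c / 2
  · exact iff_of_true (CrossAmoeba.components_eq_of_cond hn hapos hbpos hc hcond) hcond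
  · refine iff_of_false ?_ hcond
    rw [CrossAmoeba.components_eq_of_not_cond hn hapos hbpos hc hcond]
    omega
end

section
/- In ℂ[u,v] one has the polynomial identity u^2 + v^2 + 4u^2v^2 + u^4v^2 + u^2v^4 = (u(1+v^2) + i·v(1+u^2)) · (u(1+v^2) − i·v(1+u^2)). In particular, if p(x,y) = x + y + 4xy + x^2y + xy^2, then p(u^2, v^2) is reducible in ℂ[u,v], so p is not strongly irreducible. -/
open MvPolynomial

local notation "u" => (X 0 : MvPolynomial (Fin 2) ℂ)
local notation "v" => (X 1 : MvPolynomial (Fin 2) ℂ)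

private lemma aux_not_unit (c : ℂ) :
    ¬ IsUnit (u * (1 + v ^ 2) + C c * v * (1 + u ^ 2)) := by
  intro h
  have h2 := h.map (aeval (![Polynomial.X, 0] : Fin 2 → Polynomial ℂ))
  simp only [map_add, map_mul, map_pow, map_one, aeval_X, aeval_C,
    Matrix.cons_val_zero, Matrix.cons_val_one, Matrix.head_cons] at h2
  norm_num at h2
  exact Polynomial.not_isUnit_X h2

/-- In `ℂ[u,v]` one has
`u² + v² + 4u²v² + u⁴v² + u²v⁴ = (u(1+v²) + i·v(1+u²))·(u(1+v²) − i·v(1+u²))`;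
in particular, for `p(x,y) = x + y + 4xy + x²y + xy²` the polynomial `p(u²,v²)`
is reducible in `ℂ[u,v]`, so `p` is not strongly irreducible. -/
theorem cross_polytope_poly_factors :
    (u ^ 2 + v ^ 2 + 4 * u ^ 2 * v ^ 2 + u ^ 4 * v ^ 2 + u ^ 2 * v ^ 4 =
        (u * (1 + v ^ 2) + C Complex.I * v * (1 + u ^ 2)) *
          (u * (1 + v ^ 2) - C Complex.I * v * (1 + u ^ 2))) ∧
      ¬ Irreducible
          (u ^ 2 + v ^ 2 + 4 * u ^ 2 * v ^ 2 + u ^ 4 * v ^ 2 + u ^ 2 * v ^ 4) := by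
  have hI : (C Complex.I : MvPolynomial (Fin 2) ℂ) ^ 2 = -1 := by
    rw [← C_pow, Complex.I_sq, map_neg, map_one]
  have heq : (u ^ 2 + v ^ 2 + 4 * u ^ 2 * v ^ 2 + u ^ 4 * v ^ 2 + u ^ 2 * v ^ 4 =
        (u * (1 + v ^ 2) + C Complex.I * v * (1 + u ^ 2)) *
          (u * (1 + v ^ 2) - C Complex.I * v * (1 + u ^ 2))) := by
    linear_combination (v ^ 2 * (1 + u ^ 2) ^ 2) * hI
  refine ⟨heq, fun hirr => ?_⟩
  rcases hirr.isUnit_or_isUnit heq with h | h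
  · exact aux_not_unit Complex.I h
  · have : (u * (1 + v ^ 2) - C Complex.I * v * (1 + u ^ 2)) =
        u * (1 + v ^ 2) + C (-Complex.I) * v * (1 + u ^ 2) := by
      rw [map_neg]; ring
    rw [this] at h
    exact aux_not_unit (-Complex.I) h
end

section
/- The polynomial p(x,y) = x + y + 4xy + x^2y + xy^2 is not optimal: the number of connected components of the complement ℝ^2 ∖ 𝒜_p of its amoeba is strictly less than 5, the number of lattice points of its Newton polygon (the quadrilateral with vertices (1,0),(0,1),(2,1),(1,2), containing also the interior point (1,1)). -/
set_option maxHeartbeats 1000000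

/-- The amoeba of a function on the torus `(ℂ∖{0})²`. -/
def amoeba2 (f : ℂ → ℂ → ℂ) : Set (ℝ × ℝ) :=
  {ξ | ∃ x y : ℂ, x ≠ 0 ∧ y ≠ 0 ∧ f x y = 0 ∧
        ξ = (Real.log ‖x‖, Real.log ‖y‖)}

namespace CrossPolyAux

open Real

noncomputable def p4 : ℂ → ℂ → ℂ := fun x y => x + y + 4 * x * y + x ^ 2 * y + x * y ^ 2

noncomputable def A : Set (ℝ × ℝ) := amoeba2 p4

lemma key (a b c d s t : ℝ) (hb : 1 ≤ b) (hab : b + 2 < a)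
    (hc : c ^ 2 + s ^ 2 = 1) (hd : d ^ 2 + t ^ 2 = 1)
    (e1 : a * c + b * d + 2 = 0)
    (e2 : s ^ 2 * (a ^ 2 - 1) = t ^ 2 * (b ^ 2 - 1)) : False := by
  have ha : 3 < a := by linarith
  have hd1 : d ≤ 1 := by nlinarith [sq_nonneg t, sq_nonneg (d-1), sq_nonneg (d+1)]
  have hd2 : -1 ≤ d := by nlinarith [sq_nonneg t, sq_nonneg (d+1)]
  have hP : a^2*(a^2-1) - a^2*(b^2-1)*(1-d^2) - (a^2-1)*(2+b*d)^2 = 0 := by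
    have e3 : (a^2-1)*(1-c^2) = (b^2-1)*(1-d^2) := by nlinarith [e2, hc, hd]
    have e4 : a^2*c^2 = (2+b*d)^2 := by nlinarith [e1]
    nlinarith [e3, e4]
  have ha1 : (0:ℝ) < a^2 - 1 := by nlinarith
  have hP1 : 0 < (a^2-1)*(a^2-(2+b)^2) := by
    have : (0:ℝ) < a^2-(2+b)^2 := by nlinarith
    exact mul_pos ha1 this
  have hPm : 0 < (a^2-1)*(a^2-(2-b)^2) := by
    have : (0:ℝ) < a^2-(2-b)^2 := by nlinarith
    exact mul_pos ha1 this
  have ht3 : 0 ≤ (a^2-b^2)*(1-d^2) := by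
    have h1 : (0:ℝ) ≤ a^2-b^2 := by nlinarith
    have h2 : (0:ℝ) ≤ 1-d^2 := by nlinarith
    exact mul_nonneg h1 h2
  have ht1 : 0 ≤ (1-d)*((a^2-1)*(a^2-(2-b)^2)) := mul_nonneg (by linarith) hPm.le
  have ht2 : 0 ≤ (1+d)*((a^2-1)*(a^2-(2+b)^2)) := mul_nonneg (by linarith) hP1.le
  rcases le_total 0 d with h | h
  · have hs : (a^2-1)*(a^2-(2+b)^2) ≤ (1+d)*((a^2-1)*(a^2-(2+b)^2)) :=
      le_mul_of_one_le_left hP1.le (by linarith)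
    linarith [hP, ht1, ht3, hs, hP1]
  · have hs : (a^2-1)*(a^2-(2-b)^2) ≤ (1-d)*((a^2-1)*(a^2-(2-b)^2)) :=
      le_mul_of_one_le_left hPm.le (by linarith)
    linarith [hP, ht2, ht3, hs, hPm]

lemma notinA (u v : ℝ) (h : cosh v + 2 < cosh u) : (u, v) ∉ A := by
  rintro ⟨x, y, hx, hy, hf, hxi⟩
  obtain ⟨hu, hv⟩ : u = Real.log ‖x‖ ∧ v = Real.log ‖y‖ := by
    simpa [Prod.ext_iff] using hxi
  have hr : (0:ℝ) < ‖x‖ := norm_pos_iff.mpr hx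
  have hρ : (0:ℝ) < ‖y‖ := norm_pos_iff.mpr hy
  set r := ‖x‖ with hrdef
  set ρ := ‖y‖ with hρdef
  have hsum : x⁻¹ + y⁻¹ + 4 + x + y = 0 := by
    have h1 : x * y ≠ 0 := mul_ne_zero hx hy
    have : x⁻¹ + y⁻¹ + 4 + x + y = (x + y + 4*x*y + x^2*y + x*y^2) / (x*y) := by
      field_simp; ring
    rw [this]
    have hf' : x + y + 4*x*y + x^2*y + x*y^2 = 0 := hf
    rw [hf', zero_div]
  have hnx : Complex.normSq x = r^2 := (Complex.sq_norm x).symm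
  have hny : Complex.normSq y = ρ^2 := (Complex.sq_norm y).symm
  have hre : x.re / r^2 + y.re / ρ^2 + 4 + x.re + y.re = 0 := by
    have := congrArg Complex.re hsum
    simpa [Complex.inv_re, hnx, hny] using this
  have him : -x.im / r^2 + -y.im / ρ^2 + x.im + y.im = 0 := by
    have := congrArg Complex.im hsum
    simpa [Complex.inv_im, hnx, hny] using this
  have hnx' : x.re^2 + x.im^2 = r^2 := by
    rw [← hnx]; simp [Complex.normSq_apply]; ring
  have hny' : y.re^2 + y.im^2 = ρ^2 := by
    rw [← hny]; simp [Complex.normSq_apply]; ring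
  have hcoshu : cosh u = (r + r⁻¹)/2 := by rw [hu]; exact Real.cosh_log hr
  have hcoshv : cosh v = (ρ + ρ⁻¹)/2 := by rw [hv]; exact Real.cosh_log hρ
  have hsinhu : sinh u = (r - r⁻¹)/2 := by rw [hu]; exact Real.sinh_log hr
  have hsinhv : sinh v = (ρ - ρ⁻¹)/2 := by rw [hv]; exact Real.sinh_log hρ
  have hrne : r ≠ 0 := ne_of_gt hr
  have hρne : ρ ≠ 0 := ne_of_gt hρ
  refine key (cosh u) (cosh v) (x.re/r) (y.re/ρ) (x.im/r) (y.im/ρ)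
    (Real.one_le_cosh v) h ?_ ?_ ?_ ?_
  · field_simp; linarith [hnx']
  · field_simp; linarith [hny']
  · rw [hcoshu, hcoshv]
    field_simp at hre ⊢
    linarith [hre]
  · have hl : sinh u * (x.im/r) + sinh v * (y.im/ρ) = 0 := by
      rw [hsinhu, hsinhv]
      field_simp at him ⊢
      linarith [him]
    have ha2 : cosh u ^2 - 1 = sinh u ^2 := by nlinarith [Real.cosh_sq u]
    have hb2 : cosh v ^2 - 1 = sinh v ^2 := by nlinarith [Real.cosh_sq v]
    rw [ha2, hb2]
    have hsq : (sinh u * (x.im/r))^2 = (sinh v * (y.im/ρ))^2 := by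
      have hh : sinh u * (x.im/r) = -(sinh v * (y.im/ρ)) := by linarith
      rw [hh]; ring
    linear_combination hsq

lemma inA_aux (u v : ℝ) (h0 : 0 ≤ v) (hvu : v ≤ u) (h : cosh u ≤ cosh v + 2) :
    (u, v) ∈ A := by
  have hu0 : 0 ≤ u := le_trans h0 hvu
  rcases eq_or_lt_of_le hu0 with hu | hu
  · -- u = 0, hence v = 0
    have hv0 : v = 0 := le_antisymm (hvu.trans hu.symm.le) h0
    refine ⟨-1, -1, by norm_num, by norm_num, ?_, ?_⟩
    · show (-1:ℂ) + -1 + 4 * (-1) * (-1) + (-1)^2 * (-1) + (-1) * (-1)^2 = 0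
      norm_num
    · simp [← hu, hv0]
  · have hsu : 0 < sinh u := Real.sinh_pos_iff.2 hu
    set k : ℝ := sinh v / sinh u with hkdef
    have hk0 : 0 ≤ k := div_nonneg (Real.sinh_nonneg_iff.2 h0) hsu.le
    have hk1 : k ≤ 1 := (div_le_one hsu).2 (Real.sinh_le_sinh.2 hvu)
    have hks : k * sinh u = sinh v := div_mul_cancel₀ _ (ne_of_gt hsu)
    set H : ℝ → ℝ := fun φ => cosh v * Real.cos φ - cosh u * Real.sqrt (1 - k^2 * Real.sin φ^2) + 2 with hHdef
    have hcont : Continuous H := by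
      apply Continuous.add
      apply Continuous.sub
      · exact continuous_const.mul Real.continuous_cos
      · exact continuous_const.mul (Real.continuous_sqrt.comp (by continuity))
      · exact continuous_const
    have hH0 : 0 ≤ H 0 := by
      simp only [hHdef, Real.cos_zero, Real.sin_zero]
      norm_num
      nlinarith [h]
    have hHπ : H π ≤ 0 := by
      simp only [hHdef, Real.cos_pi, Real.sin_pi]
      norm_num
      nlinarith [Real.one_le_cosh u, Real.one_le_cosh v]
    obtain ⟨φ, hφmem, hφ⟩ : ∃ φ ∈ Set.Icc 0 π, H φ = 0 := by
      have hsub := intermediate_value_Icc' Real.pi_pos.le hcont.continuousOn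
      obtain ⟨φ, hmem, hval⟩ := hsub ⟨hHπ, hH0⟩
      exact ⟨φ, hmem, hval⟩
    set sφ : ℝ := Real.sin φ with hsφdef
    set cφ : ℝ := Real.cos φ with hcφdef
    have hsφ0 : 0 ≤ sφ := Real.sin_nonneg_of_nonneg_of_le_pi hφmem.1 hφmem.2
    have hQ : 0 ≤ 1 - k^2 * sφ^2 := by nlinarith [Real.sin_sq_le_one φ]
    set S : ℝ := Real.sqrt (1 - k^2 * sφ^2) with hSdef
    have hS2 : S^2 = 1 - k^2 * sφ^2 := Real.sq_sqrt hQ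
    set cθ : ℝ := -S with hcθdef
    set sθ : ℝ := -(k * sφ) with hsθdef
    have hθ : cθ^2 + sθ^2 = 1 := by
      simp only [hcθdef, hsθdef]
      rw [neg_pow, neg_pow]
      simp
      nlinarith [hS2]
    have hφ' : cosh v * cφ - cosh u * S + 2 = 0 := hφ
    set x : ℂ := (Real.exp u : ℂ) * ((cθ : ℂ) + (sθ:ℂ) * Complex.I) with hxdef
    set y : ℂ := (Real.exp v : ℂ) * ((cφ : ℂ) + (sφ:ℂ) * Complex.I) with hydef
    set x' : ℂ := (Real.exp (-u) : ℂ) * ((cθ : ℂ) - (sθ:ℂ) * Complex.I) with hx'def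
    set y' : ℂ := (Real.exp (-v) : ℂ) * ((cφ : ℂ) - (sφ:ℂ) * Complex.I) with hy'def
    have hθy : cφ^2 + sφ^2 = 1 := by
      simp only [hcφdef, hsφdef]; exact Real.cos_sq_add_sin_sq φ
    have habsx : ‖x‖ = Real.exp u := by
      rw [hxdef, norm_mul]
      rw [Complex.norm_real, Complex.norm_add_mul_I]
      rw [hθ, Real.sqrt_one]
      simp [abs_of_pos (Real.exp_pos u)]
    have habsy : ‖y‖ = Real.exp v := by
      rw [hydef, norm_mul]
      rw [Complex.norm_real, Complex.norm_add_mul_I]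
      rw [hθy, Real.sqrt_one]
      simp [abs_of_pos (Real.exp_pos v)]
    have hxne : x ≠ 0 := by
      intro h0x; rw [h0x, norm_zero] at habsx; exact (Real.exp_pos u).ne habsx
    have hyne : y ≠ 0 := by
      intro h0y; rw [h0y, norm_zero] at habsy; exact (Real.exp_pos v).ne habsy
    have hxx' : x * x' = 1 := by
      have h1 : (Real.exp u : ℂ) * (Real.exp (-u) : ℂ) = 1 := by
        rw [← Complex.ofReal_mul, ← Real.exp_add]; simp
      have h2 : ((cθ:ℂ) + (sθ:ℂ) * Complex.I) * ((cθ:ℂ) - (sθ:ℂ) * Complex.I) = 1 := by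
        have hc : ((cθ:ℂ))^2 + ((sθ:ℂ))^2 = 1 := by exact_mod_cast congrArg (fun t : ℝ => (t : ℂ)) hθ
        linear_combination hc - (sθ:ℂ)^2 * Complex.I_sq
      calc x * x' = ((Real.exp u : ℂ) * (Real.exp (-u):ℂ)) *
            (((cθ:ℂ) + (sθ:ℂ)*Complex.I) * ((cθ:ℂ) - (sθ:ℂ)*Complex.I)) := by
              rw [hxdef, hx'def]; ring
        _ = 1 := by rw [h1, h2, one_mul]
    have hyy' : y * y' = 1 := by
      have h1 : (Real.exp v : ℂ) * (Real.exp (-v) : ℂ) = 1 := by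
        rw [← Complex.ofReal_mul, ← Real.exp_add]; simp
      have h2 : ((cφ:ℂ) + (sφ:ℂ) * Complex.I) * ((cφ:ℂ) - (sφ:ℂ) * Complex.I) = 1 := by
        have hc : ((cφ:ℂ))^2 + ((sφ:ℂ))^2 = 1 := by exact_mod_cast congrArg (fun t : ℝ => (t : ℂ)) hθy
        linear_combination hc - (sφ:ℂ)^2 * Complex.I_sq
      calc y * y' = ((Real.exp v : ℂ) * (Real.exp (-v):ℂ)) *
            (((cφ:ℂ) + (sφ:ℂ)*Complex.I) * ((cφ:ℂ) - (sφ:ℂ)*Complex.I)) := by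
              rw [hydef, hy'def]; ring
        _ = 1 := by rw [h1, h2, one_mul]
    have hcu : Real.exp u + Real.exp (-u) = 2 * cosh u := by rw [Real.cosh_eq]; ring
    have hcv : Real.exp v + Real.exp (-v) = 2 * cosh v := by rw [Real.cosh_eq]; ring
    have hsu' : Real.exp u - Real.exp (-u) = 2 * sinh u := by rw [Real.sinh_eq]; ring
    have hsv' : Real.exp v - Real.exp (-v) = 2 * sinh v := by rw [Real.sinh_eq]; ring
    have Hcu : ((Real.exp u : ℝ) : ℂ) + ((Real.exp (-u) : ℝ) : ℂ) = 2*((cosh u : ℝ):ℂ) := by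
      exact_mod_cast congrArg (fun t : ℝ => (t:ℂ)) hcu
    have Hcv : ((Real.exp v : ℝ) : ℂ) + ((Real.exp (-v) : ℝ) : ℂ) = 2*((cosh v : ℝ):ℂ) := by
      exact_mod_cast congrArg (fun t : ℝ => (t:ℂ)) hcv
    have Hsu : ((Real.exp u : ℝ) : ℂ) - ((Real.exp (-u) : ℝ) : ℂ) = 2*((sinh u : ℝ):ℂ) := by
      exact_mod_cast congrArg (fun t : ℝ => (t:ℂ)) hsu'
    have Hsv : ((Real.exp v : ℝ) : ℂ) - ((Real.exp (-v) : ℝ) : ℂ) = 2*((sinh v : ℝ):ℂ) := by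
      exact_mod_cast congrArg (fun t : ℝ => (t:ℂ)) hsv'
    have Hφc : ((cosh v : ℝ):ℂ) * (cφ:ℂ) - ((cosh u : ℝ):ℂ) * (S:ℂ) + 2 = 0 := by
      exact_mod_cast congrArg (fun t : ℝ => (t:ℂ)) hφ'
    have Hcθ : (cθ:ℂ) = -(S:ℂ) := by exact_mod_cast congrArg (fun t : ℝ => (t:ℂ)) hcθdef
    have Hsθ : (sθ:ℂ) = -((k:ℂ)*(sφ:ℂ)) := by exact_mod_cast congrArg (fun t : ℝ => (t:ℂ)) hsθdef
    have Hks : (k:ℂ)*((sinh u : ℝ):ℂ) = ((sinh v : ℝ):ℂ) := by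
      exact_mod_cast congrArg (fun t : ℝ => (t:ℂ)) hks
    have hsum : x' + y' + 4 + x + y = 0 := by
      rw [hxdef, hydef, hx'def, hy'def]
      linear_combination (cθ:ℂ)*Hcu + (cφ:ℂ)*Hcv + Complex.I*(sθ:ℂ)*Hsu + Complex.I*(sφ:ℂ)*Hsv
        + 2*Hφc + 2*((cosh u : ℝ):ℂ)*Hcθ + 2*Complex.I*((sinh u : ℝ):ℂ)*Hsθ
        - 2*Complex.I*(sφ:ℂ)*Hks
    refine ⟨x, y, hxne, hyne, ?_, ?_⟩
    · show x + y + 4 * x * y + x^2 * y + x * y^2 = 0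
      linear_combination x*y*hsum - y*hxx' - x*hyy'
    · rw [habsx, habsy, Real.log_exp, Real.log_exp]

lemma A_swap (u v : ℝ) (h : (u, v) ∈ A) : (v, u) ∈ A := by
  obtain ⟨x, y, hx, hy, hf, hxi⟩ := h
  obtain ⟨hu, hv⟩ : u = Real.log ‖x‖ ∧ v = Real.log ‖y‖ := by
    simpa [Prod.ext_iff] using hxi
  refine ⟨y, x, hy, hx, ?_, by rw [hu, hv]⟩
  have hf' : x + y + 4*x*y + x^2*y + x*y^2 = 0 := hf
  show y + x + 4*y*x + y^2*x + y*x^2 = 0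
  linear_combination hf'
lemma A_neg (u v : ℝ) (h : (u, v) ∈ A) : (-u, v) ∈ A := by
  obtain ⟨x, y, hx, hy, hf, hxi⟩ := h
  obtain ⟨hu, hv⟩ : u = Real.log ‖x‖ ∧ v = Real.log ‖y‖ := by
    simpa [Prod.ext_iff] using hxi
  refine ⟨x⁻¹, y, inv_ne_zero hx, hy, ?_, ?_⟩
  · have hf' : x + y + 4*x*y + x^2*y + x*y^2 = 0 := hf
    show x⁻¹ + y + 4*x⁻¹*y + (x⁻¹)^2*y + x⁻¹*y^2 = 0
    have hx2 : (x^2 : ℂ) ≠ 0 := pow_ne_zero _ hx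
    have h2 : (x⁻¹ + y + 4*x⁻¹*y + (x⁻¹)^2*y + x⁻¹*y^2) * x^2
        = x + y*x^2 + 4*x*y + y + x*y^2 := by
      field_simp
    have h3 : (x⁻¹ + y + 4*x⁻¹*y + (x⁻¹)^2*y + x⁻¹*y^2) * x^2 = 0 := by
      rw [h2]; linear_combination hf'
    exact (mul_eq_zero.mp h3).resolve_right hx2
  · rw [norm_inv, Real.log_inv, hu, hv]

lemma inA (u v : ℝ) (h1 : cosh u ≤ cosh v + 2) (h2 : cosh v ≤ cosh u + 2) :
    (u, v) ∈ A := by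
  have habs : ∀ a b : ℝ, (|a|, |b|) ∈ A → (a, b) ∈ A := by
    intro a b hab
    have h1 : (-|a|, |b|) ∈ A := A_neg _ _ hab
    have h2 : (|a|, -|b|) ∈ A := A_swap _ _ (A_neg _ _ (A_swap _ _ hab))
    have h3 : (-|a|, -|b|) ∈ A := A_swap _ _ (A_neg _ _ (A_swap _ _ h1))
    rcases abs_choice a with ha | ha <;> rcases abs_choice b with hb | hb
    · rwa [ha, hb] at hab
    · have hb' : b = -|b| := by linarith
      rw [← ha, hb']; exact h2
    · have ha' : a = -|a| := by linarith
      rw [ha', ← hb]; exact h1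
    · have ha' : a = -|a| := by linarith
      have hb' : b = -|b| := by linarith
      rw [ha', hb']; exact h3
  apply habs
  rcases le_total |v| |u| with hle | hle
  · exact inA_aux |u| |v| (abs_nonneg v) hle (by rwa [Real.cosh_abs, Real.cosh_abs])
  · have := inA_aux |v| |u| (abs_nonneg u) hle (by rwa [Real.cosh_abs, Real.cosh_abs])
    exact A_swap _ _ this

lemma cosh_two_gt_three : (3:ℝ) < cosh 2 := by
  rw [Real.cosh_eq]
  have h2 : Real.exp 2 = Real.exp 1 * Real.exp 1 := by rw [← Real.exp_add]; norm_num
  nlinarith [Real.exp_one_gt_d9, Real.exp_pos (-2:ℝ)]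

lemma main_pos (u v : ℝ) (hu : 0 < u) (h : cosh v + 2 < cosh u) :
    ∃ T : Set (ℝ × ℝ), T ⊆ Aᶜ ∧ IsPreconnected T ∧ (u, v) ∈ T ∧ ((2:ℝ), (0:ℝ)) ∈ T := by
  refine ⟨segment ℝ (u, v) (u, 0) ∪ segment ℝ (u, 0) (2, 0), ?_, ?_, ?_, ?_⟩
  · rintro q (hq | hq)
    · obtain ⟨a, b, ha, hb, hab, rfl⟩ := hq
      have hfst : (a • ((u:ℝ), v) + b • ((u:ℝ), 0)) = (u, a * v) := by
        simp only [Prod.smul_mk, smul_eq_mul, Prod.mk_add_mk, mul_zero, add_zero, Prod.mk.injEq]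
        refine ⟨by rw [← add_mul, hab, one_mul], by simp⟩
      rw [hfst]
      apply notinA
      have hcav : cosh (a * v) ≤ cosh v := by
        rw [Real.cosh_le_cosh]
        rw [abs_mul]
        have ha1 : a ≤ 1 := by linarith
        nlinarith [abs_nonneg v, abs_of_nonneg ha]
      linarith
    · obtain ⟨a, b, ha, hb, hab, rfl⟩ := hq
      have hfst : (a • ((u:ℝ), (0:ℝ)) + b • ((2:ℝ), 0)) = (a * u + b * 2, 0) := by
        simp only [Prod.smul_mk, smul_eq_mul, Prod.mk_add_mk, mul_zero, add_zero, Prod.mk.injEq]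
      rw [hfst]
      apply notinA
      rw [Real.cosh_zero]
      have h3u : 3 < cosh u := by
        have := Real.one_le_cosh v; linarith
      have hmin : min u 2 ≤ a * u + b * 2 := by
        have h1 := min_le_left u 2
        have h2 := min_le_right u 2
        nlinarith
      have hminpos : 0 < min u 2 := lt_min hu (by norm_num)
      have hcosh : cosh (min u 2) ≤ cosh (a * u + b * 2) := by
        rw [Real.cosh_le_cosh]
        rw [abs_of_pos hminpos, abs_of_pos (lt_of_lt_of_le hminpos hmin)]
        exact hmin
      rcases le_total u 2 with hcase | hcase
      · rw [min_eq_left hcase] at hcosh; linarith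
      · rw [min_eq_right hcase] at hcosh; linarith [cosh_two_gt_three]
  · apply IsPreconnected.union (u, (0:ℝ))
    · exact right_mem_segment ℝ _ _
    · exact left_mem_segment ℝ _ _
    · exact (convex_segment _ _).isPreconnected
    · exact (convex_segment _ _).isPreconnected
  · exact Or.inl (left_mem_segment ℝ _ _)
  · exact Or.inr (right_mem_segment ℝ _ _)

noncomputable def base : Fin 4 → ℝ × ℝ := ![(2, 0), (-2, 0), (0, 2), (0, -2)]

lemma main_cover (p : ℝ × ℝ) (hp : p ∉ A) :
    ∃ i : Fin 4, ∃ T : Set (ℝ × ℝ), T ⊆ Aᶜ ∧ IsPreconnected T ∧ p ∈ T ∧ base i ∈ T := by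
  have hmapneg : ∀ T : Set (ℝ × ℝ), T ⊆ Aᶜ → ((fun q : ℝ × ℝ => (-q.1, q.2)) '' T) ⊆ Aᶜ := by
    rintro T hT q ⟨w, hw, rfl⟩ hmem
    exact hT hw (by simpa using A_neg (-w.1) w.2 hmem)
  have hmapswap : ∀ T : Set (ℝ × ℝ), T ⊆ Aᶜ → (Prod.swap '' T) ⊆ Aᶜ := by
    rintro T hT q ⟨w, hw, rfl⟩ hmem
    exact hT hw (A_swap _ _ hmem)
  have hcontneg : Continuous (fun q : ℝ × ℝ => ((-q.1, q.2) : ℝ × ℝ)) := by continuity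
  rcases lt_or_ge (cosh p.2 + 2) (cosh p.1) with hfar | hnear
  · -- far in x direction
    rcases lt_trichotomy p.1 0 with hneg | hzero | hpos
    · obtain ⟨T, hT1, hT2, hT3, hT4⟩ := main_pos (-p.1) p.2 (by linarith)
        (by rwa [Real.cosh_neg])
      refine ⟨1, (fun q : ℝ × ℝ => (-q.1, q.2)) '' T, hmapneg T hT1,
        hT2.image _ hcontneg.continuousOn, ⟨(-p.1, p.2), hT3, by simp⟩,
        ⟨(2, 0), hT4, by simp [base]⟩⟩
    · exfalso
      rw [hzero, Real.cosh_zero] at hfar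
      have := Real.one_le_cosh p.2; linarith
    · obtain ⟨T, hT1, hT2, hT3, hT4⟩ := main_pos p.1 p.2 hpos hfar
      exact ⟨0, T, hT1, hT2, hT3, by simpa [base] using hT4⟩
  rcases lt_or_ge (cosh p.1 + 2) (cosh p.2) with hfar2 | hnear2
  · rcases lt_trichotomy p.2 0 with hneg | hzero | hpos
    · obtain ⟨T, hT1, hT2, hT3, hT4⟩ := main_pos (-p.2) p.1 (by linarith)
        (by rwa [Real.cosh_neg])
      refine ⟨3, Prod.swap '' ((fun q : ℝ × ℝ => (-q.1, q.2)) '' T),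
        hmapswap _ (hmapneg T hT1),
        ((hT2.image _ hcontneg.continuousOn).image _ continuous_swap.continuousOn),
        ⟨(p.2, p.1), ⟨(-p.2, p.1), hT3, by simp⟩, by simp⟩, ?_⟩
      · exact ⟨(-2, 0), ⟨(2, 0), hT4, by simp⟩, by simp [base]⟩
    · exfalso
      rw [hzero, Real.cosh_zero] at hfar2
      have := Real.one_le_cosh p.1; linarith
    · obtain ⟨T, hT1, hT2, hT3, hT4⟩ := main_pos p.2 p.1 hpos hfar2
      refine ⟨2, Prod.swap '' T, hmapswap _ hT1,
        hT2.image _ continuous_swap.continuousOn,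
        ⟨(p.2, p.1), hT3, by simp⟩, ⟨(2, 0), hT4, by simp [base]⟩⟩
  · exact absurd (inA p.1 p.2 hnear hnear2) (by simpa using hp)


end CrossPolyAux

/-- The polynomial `p(x,y) = x + y + 4xy + x²y + xy²` is not optimal: the number
of connected components of the complement of its amoeba is strictly smaller
than `5`, the number of lattice points of its Newton polygon. -/
theorem cross_polytope_poly_not_optimal :
    Nat.card
        (ConnectedComponents
          ↥(amoeba2 fun x y =>
              x + y + 4 * x * y + x ^ 2 * y + x * y ^ 2)ᶜ) < 5 := by
  have hA : (amoeba2 fun x y => x + y + 4 * x * y + x ^ 2 * y + x * y ^ 2) = CrossPolyAux.A := rfl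
  rw [hA]
  have hb : ∀ i : Fin 4, CrossPolyAux.base i ∈ CrossPolyAux.Aᶜ := by
    intro i
    fin_cases i
    · exact CrossPolyAux.notinA 2 0 (by rw [Real.cosh_zero]; linarith [CrossPolyAux.cosh_two_gt_three])
    · exact CrossPolyAux.notinA (-2) 0 (by rw [Real.cosh_zero, Real.cosh_neg]; linarith [CrossPolyAux.cosh_two_gt_three])
    · intro hmem
      exact CrossPolyAux.notinA 2 0 (by rw [Real.cosh_zero]; linarith [CrossPolyAux.cosh_two_gt_three]) (CrossPolyAux.A_swap _ _ hmem)
    · intro hmem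
      exact CrossPolyAux.notinA (-2) 0 (by rw [Real.cosh_zero, Real.cosh_neg]; linarith [CrossPolyAux.cosh_two_gt_three])
        (CrossPolyAux.A_swap _ _ hmem)
  let g : Fin 4 → ConnectedComponents ↥(CrossPolyAux.Aᶜ) := fun i => ConnectedComponents.mk ⟨CrossPolyAux.base i, hb i⟩
  have hsurj : Function.Surjective g := by
    intro c
    obtain ⟨q, rfl⟩ := ConnectedComponents.surjective_coe c
    obtain ⟨i, T, hT1, hT2, hT3, hT4⟩ := CrossPolyAux.main_cover q.1 q.2
    refine ⟨i, ?_⟩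
    have hTsub : Subtype.val '' ((Subtype.val : ↥(CrossPolyAux.Aᶜ) → ℝ × ℝ) ⁻¹' T) = T := by
      rw [Subtype.image_preimage_coe]
      exact Set.inter_eq_self_of_subset_right hT1
    have hT' : IsPreconnected ((Subtype.val : ↥(CrossPolyAux.Aᶜ) → ℝ × ℝ) ⁻¹' T) := by
      rw [← Topology.IsInducing.subtypeVal.isPreconnected_image, hTsub]
      exact hT2
    have hmem1 : (⟨CrossPolyAux.base i, hb i⟩ : ↥(CrossPolyAux.Aᶜ)) ∈ (Subtype.val : ↥(CrossPolyAux.Aᶜ) → ℝ × ℝ) ⁻¹' T := hT4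
    have hmem2 : q ∈ (Subtype.val : ↥(CrossPolyAux.Aᶜ) → ℝ × ℝ) ⁻¹' T := hT3
    have hsub := hT'.subset_connectedComponent hmem1
    have : q ∈ connectedComponent (⟨CrossPolyAux.base i, hb i⟩ : ↥(CrossPolyAux.Aᶜ)) := hsub hmem2
    exact ConnectedComponents.coe_eq_coe.2 (connectedComponent_eq this)
  have hle := Nat.card_le_card_of_surjective g hsurj
  simp only [Nat.card_eq_fintype_card, Fintype.card_fin] at hle
  exact lt_of_le_of_lt hle (by norm_num)
end

section
/- Let S ⊂ ℝ^n be a finite set such that the origin 0 lies in the interior of the convex hull of S, and let a_s > 0 for each s ∈ S. Then the function g(ξ) = Σ_{s∈S} a_s exp(⟨s, ξ⟩) is strictly convex on ℝ^n, tends to +∞ as |ξ| → ∞, and attains its infimum on ℝ^n at a unique point ρ ∈ ℝ^n. -/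
set_option maxHeartbeats 1000000

open Filter

private lemma exp_sum_key {n : ℕ} (S : Finset (Fin n → ℝ))
    (h0 : (0 : Fin n → ℝ) ∈ interior (convexHull ℝ (↑S : Set (Fin n → ℝ)))) :
    ∃ ε > 0, ∀ ξ : Fin n → ℝ, ∃ s ∈ S, ε * ‖ξ‖ ≤ ∑ i, s i * ξ i := by
  have hSne : S.Nonempty := by
    rcases S.eq_empty_or_nonempty with h | h
    · exfalso
      have := interior_subset h0
      rw [h] at this
      simp at this
    · exact h
  obtain ⟨ε, hε, hball⟩ := Metric.mem_nhds_iff.mp (mem_interior_iff_mem_nhds.mp h0)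
  refine ⟨ε / 2, by positivity, fun ξ => ?_⟩
  by_cases hξ : ξ = 0
  · obtain ⟨s, hs⟩ := hSne
    exact ⟨s, hs, by simp [hξ]⟩
  · have hnorm : 0 < ‖ξ‖ := norm_pos_iff.mpr hξ
    set c : ℝ := ε / (2 * ‖ξ‖) with hc
    have hcpos : 0 < c := by positivity
    have hv : c • ξ ∈ convexHull ℝ (↑S : Set (Fin n → ℝ)) := by
      apply hball
      simp only [Metric.mem_ball, dist_zero_right, norm_smul, Real.norm_eq_abs,
        abs_of_pos hcpos, hc]
      rw [abs_of_pos (show 0 < ε / (2 * ‖ξ‖) by positivity), div_mul_eq_mul_div, mul_comm 2 ‖ξ‖, ← div_div, mul_div_assoc,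
        div_self hnorm.ne', mul_one]
      linarith
    have hconv : ConvexOn ℝ (convexHull ℝ (↑S : Set (Fin n → ℝ)))
        (fun x : Fin n → ℝ => ∑ i, x i * ξ i) := by
      refine ⟨convex_convexHull ℝ _, fun x _ y _ p q _ _ _ => le_of_eq ?_⟩
      simp [Finset.sum_add_distrib, Finset.mul_sum, add_mul, mul_assoc]
    obtain ⟨s, hs, hle⟩ := hconv.exists_ge_of_mem_convexHull
      (subset_convexHull ℝ (↑S : Set (Fin n → ℝ))) hv
    refine ⟨s, hs, le_trans ?_ hle⟩
    have hsum : ∑ i, (c • ξ) i * ξ i = c * ∑ i, ξ i ^ 2 := by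
      simp [Finset.mul_sum, mul_assoc, sq]
    rw [hsum]
    -- ‖ξ‖ ^ 2 ≤ ∑ i, ξ i ^ 2
    have hn : n ≠ 0 := by
      rintro rfl
      exact hξ (Subsingleton.elim _ _)
    haveI : Nonempty (Fin n) := ⟨⟨0, Nat.pos_of_ne_zero hn⟩⟩
    obtain ⟨i, hi⟩ := Finite.exists_max fun i => |ξ i|
    have h1 : ‖ξ‖ ≤ |ξ i| := by
      rw [pi_norm_le_iff_of_nonneg (abs_nonneg _)]
      intro j; exact hi j
    have h2 : ‖ξ‖ ^ 2 ≤ ∑ j, ξ j ^ 2 := by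
      calc ‖ξ‖ ^ 2 ≤ |ξ i| ^ 2 := by
            apply pow_le_pow_left₀ (norm_nonneg _) h1
        _ = ξ i ^ 2 := sq_abs _
        _ ≤ ∑ j, ξ j ^ 2 :=
            Finset.single_le_sum (f := fun j => ξ j ^ 2) (fun j _ => sq_nonneg _) (Finset.mem_univ i)
    calc ε / 2 * ‖ξ‖ = c * ‖ξ‖ ^ 2 := by
          rw [hc]; field_simp
      _ ≤ c * ∑ i, ξ i ^ 2 := by
          exact mul_le_mul_of_nonneg_left h2 hcpos.le

/-- Let `S ⊂ ℝⁿ` be a finite set with the origin in the interior of its convex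
hull and let `a_s > 0` for `s ∈ S`.  Then `g(ξ) = Σ_{s∈S} a_s exp⟨s,ξ⟩` is
strictly convex on `ℝⁿ`, tends to `+∞` as `|ξ| → ∞`, and attains its infimum at
a unique point `ρ ∈ ℝⁿ`. -/
theorem exp_sum_strictly_convex_unique_min {n : ℕ}
    (S : Finset (Fin n → ℝ))
    (h0 : (0 : Fin n → ℝ) ∈ interior (convexHull ℝ (↑S : Set (Fin n → ℝ))))
    (a : (Fin n → ℝ) → ℝ) (ha : ∀ s ∈ S, 0 < a s) :
    StrictConvexOn ℝ Set.univ
        (fun ξ : Fin n → ℝ => ∑ s ∈ S, a s * Real.exp (∑ i, s i * ξ i)) ∧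
      Tendsto (fun ξ : Fin n → ℝ => ∑ s ∈ S, a s * Real.exp (∑ i, s i * ξ i))
        (cocompact (Fin n → ℝ)) atTop ∧
      ∃! ρ : Fin n → ℝ, ∀ ξ : Fin n → ℝ,
        ∑ s ∈ S, a s * Real.exp (∑ i, s i * ρ i) ≤
          ∑ s ∈ S, a s * Real.exp (∑ i, s i * ξ i) := by
  obtain ⟨ε, hε, hkey⟩ := exp_sum_key S h0
  have hSne : S.Nonempty := by
    obtain ⟨s, hs, -⟩ := hkey 0
    exact ⟨s, hs⟩
  set g : (Fin n → ℝ) → ℝ :=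
    fun ξ => ∑ s ∈ S, a s * Real.exp (∑ i, s i * ξ i) with hg
  -- strict convexity
  have hconv : StrictConvexOn ℝ Set.univ g := by
    refine ⟨convex_univ, fun ξ _ η _ hne p q hp hq hpq => ?_⟩
    have hlin : ∀ s : Fin n → ℝ,
        ∑ i, s i * (p • ξ + q • η) i = p * ∑ i, s i * ξ i + q * ∑ i, s i * η i := by
      intro s
      simp [Finset.sum_add_distrib, Finset.mul_sum, mul_add]
      congr 1 <;> apply Finset.sum_congr rfl <;> intro i _ <;> ring
    have hRHS : p • g ξ + q • g η
        = ∑ s ∈ S, (p * (a s * Real.exp (∑ i, s i * ξ i))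
            + q * (a s * Real.exp (∑ i, s i * η i))) := by
      simp [hg, smul_eq_mul, Finset.mul_sum, Finset.sum_add_distrib]
    rw [hRHS]
    have hterm : ∀ s ∈ S, a s * Real.exp (∑ i, s i * (p • ξ + q • η) i)
        ≤ p * (a s * Real.exp (∑ i, s i * ξ i))
          + q * (a s * Real.exp (∑ i, s i * η i)) := by
      intro s hs
      rw [hlin s]
      have := convexOn_exp.2 (Set.mem_univ (∑ i, s i * ξ i))
        (Set.mem_univ (∑ i, s i * η i)) hp.le hq.le hpq
      simp only [smul_eq_mul] at this
      calc a s * Real.exp (p * ∑ i, s i * ξ i + q * ∑ i, s i * η i)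
          ≤ a s * (p * Real.exp (∑ i, s i * ξ i) + q * Real.exp (∑ i, s i * η i)) :=
            mul_le_mul_of_nonneg_left this (ha s hs).le
        _ = _ := by ring
    have hstrict : ∃ s ∈ S, a s * Real.exp (∑ i, s i * (p • ξ + q • η) i)
        < p * (a s * Real.exp (∑ i, s i * ξ i))
          + q * (a s * Real.exp (∑ i, s i * η i)) := by
      obtain ⟨s, hs, hle⟩ := hkey (ξ - η)
      have hd : ξ - η ≠ 0 := sub_ne_zero.mpr hne
      have hpos : (0 : ℝ) < ε * ‖ξ - η‖ :=
        mul_pos hε (norm_pos_iff.mpr hd)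
      have hnesum : (∑ i, s i * ξ i) ≠ ∑ i, s i * η i := by
        intro h
        have : ∑ i, s i * (ξ - η) i = 0 := by
          simp only [Pi.sub_apply, mul_sub, Finset.sum_sub_distrib, h, sub_self]
        linarith [lt_of_lt_of_le hpos hle, this]
      refine ⟨s, hs, ?_⟩
      rw [hlin s]
      have := strictConvexOn_exp.2 (Set.mem_univ (∑ i, s i * ξ i))
        (Set.mem_univ (∑ i, s i * η i)) hnesum hp hq hpq
      simp only [smul_eq_mul] at this
      calc a s * Real.exp (p * ∑ i, s i * ξ i + q * ∑ i, s i * η i)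
          < a s * (p * Real.exp (∑ i, s i * ξ i) + q * Real.exp (∑ i, s i * η i)) :=
            mul_lt_mul_of_pos_left this (ha s hs)
        _ = _ := by ring
    exact Finset.sum_lt_sum hterm hstrict
  -- coercivity
  have hinf : 0 < S.inf' hSne a := by
    rw [Finset.lt_inf'_iff]
    exact fun s hs => ha s hs
  have hlb : ∀ ξ, S.inf' hSne a * Real.exp (ε * ‖ξ‖) ≤ g ξ := by
    intro ξ
    obtain ⟨s, hs, hle⟩ := hkey ξ
    calc S.inf' hSne a * Real.exp (ε * ‖ξ‖)
        ≤ a s * Real.exp (∑ i, s i * ξ i) :=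
          mul_le_mul (Finset.inf'_le a hs) (Real.exp_le_exp.mpr hle)
            (Real.exp_pos _).le (ha s hs).le
      _ ≤ g ξ := Finset.single_le_sum
          (f := fun t => a t * Real.exp (∑ i, t i * ξ i))
          (fun t ht => mul_nonneg (ha t ht).le (Real.exp_pos _).le) hs
  have hcoer : Tendsto g (cocompact (Fin n → ℝ)) atTop := by
    have h1 : Tendsto (fun r : ℝ => S.inf' hSne a * Real.exp (ε * r)) atTop atTop := by
      apply Tendsto.const_mul_atTop hinf
      exact Real.tendsto_exp_atTop.comp (tendsto_id.const_mul_atTop hε)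
    have h2 : Tendsto (fun ξ : Fin n → ℝ => ‖ξ‖) (cocompact (Fin n → ℝ)) atTop :=
      tendsto_norm_cocompact_atTop
    exact tendsto_atTop_mono hlb (h1.comp h2)
  refine ⟨hconv, hcoer, ?_⟩
  have hgc : Continuous g := by
    apply continuous_finset_sum
    intro s _
    exact continuous_const.mul (Real.continuous_exp.comp
      (continuous_finset_sum _ fun i _ => continuous_const.mul (continuous_apply i)))
  obtain ⟨ρ, hρ⟩ := hgc.exists_forall_le hcoer
  refine ⟨ρ, hρ, fun ρ' hρ' => ?_⟩
  by_contra hne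
  have h1 : g ρ' = g ρ := le_antisymm (hρ' ρ) (hρ ρ')
  have h2 := hconv.2 (Set.mem_univ ρ') (Set.mem_univ ρ) hne
    (by norm_num : (0:ℝ) < 1/2) (by norm_num : (0:ℝ) < 1/2) (by norm_num)
  have h3 : g ρ ≤ g ((1/2 : ℝ) • ρ' + (1/2 : ℝ) • ρ) := hρ _
  simp only [smul_eq_mul] at h2
  linarith
end
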